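/- arXiv:0810.2688 — 6 statements merged into one kernel-verified Lean document; each statement's English description precedes it below -/
import Mathlib

section
/- Let T ∈ (0,∞], let b : [0,T) → ℝ and σ : [0,T) → (0,∞) be continuous, let α ∈ ℝ, and suppose lim_{t↑T} (b(t)/σ(t)²)·exp{2α∫₀ᵗ b(w) dw} = C for some C ∈ ℝ with C ≠ 0. Then lim_{t↑T} I_α(t) = ∞ if and only if lim_{t↑T} ∫₀ᵗ |b(v)| dv = ∞. -/
open MeasureTheory Filter Set Topology intervalIntegral

/-- The filter of real numbers `t` approaching `T ∈ (0,∞]` from below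
(`atTop` when `T = ⊤`, `𝓝[<] T` when `T` is finite). -/
noncomputable def upFilter (T : EReal) : Filter ℝ :=
  Filter.comap (fun x : ℝ => (x : EReal)) (𝓝[<] T)

/-- The Fisher information
`I_α(t) = ∫₀ᵗ (b(s)²/σ(s)²) · (∫₀ˢ σ(u)² · exp{2α ∫ᵤˢ b(v) dv} du) ds`. -/
noncomputable def fisherInfo (b σ : ℝ → ℝ) (α : ℝ) (t : ℝ) : ℝ :=
  ∫ s in (0:ℝ)..t, (b s) ^ 2 / (σ s) ^ 2 *
    ∫ u in (0:ℝ)..s, (σ u) ^ 2 * Real.exp (2 * α * ∫ v in u..s, b v)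

lemma upFilter_top : upFilter ⊤ = atTop := by
  have h1 : (𝓝[<] (⊤ : EReal)) = 𝓝[≠] (⊤ : EReal) := by
    congr 1
    ext x; simp [lt_top_iff_ne_top]
  rw [upFilter, h1, EReal.nhdsWithin_top, Filter.comap_map]
  exact fun a b => by exact_mod_cast id

lemma upFilter_coe (x : ℝ) : upFilter (x : EReal) = 𝓝[<] x := by
  rw [upFilter, nhdsWithin, nhdsWithin, Filter.comap_inf, Filter.comap_principal,
    EReal.nhds_coe, Filter.comap_map (fun a b => by exact_mod_cast id)]
  congr 1
  ext y; simp

lemma basis_top : (atTop : Filter ℝ).HasBasis (· ∈ Ici (0:ℝ)) (fun a => Ici 0 ∩ Ioi a) := by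
  rw [Filter.hasBasis_iff]
  intro s
  constructor
  · intro hs
    obtain ⟨a, ha⟩ := mem_atTop_sets.mp hs
    refine ⟨max a 0, mem_Ici.mpr (le_max_right _ _), fun x hx => ha x ?_⟩
    exact le_of_lt (lt_of_le_of_lt (le_max_left a 0) hx.2)
  · rintro ⟨a, ha0, ha⟩
    apply mem_atTop_sets.mpr
    refine ⟨max a 0 + 1, fun x hx => ha ⟨?_, ?_⟩⟩
    · have := le_max_right a 0; simp only [mem_Ici]; linarith
    · have := le_max_left a 0; simp only [mem_Ioi]; linarith

lemma basis_coe {c : ℝ} (hc : 0 < c) :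
    (𝓝[<] c).HasBasis (· ∈ Ico (0:ℝ) c) (fun a => Ico 0 c ∩ Ioi a) := by
  have hB := nhdsLT_basis_of_exists_lt (α := ℝ) ⟨0, hc⟩
  rw [Filter.hasBasis_iff]
  intro s
  rw [hB.mem_iff]
  constructor
  · rintro ⟨a, hac, ha⟩
    refine ⟨max a 0, ⟨le_max_right _ _, max_lt hac hc⟩, fun x hx => ha ?_⟩
    exact ⟨lt_of_le_of_lt (le_max_left a 0) hx.2, hx.1.2⟩
  · rintro ⟨a, haD, ha⟩
    exact ⟨a, haD.2, fun x hx => ha ⟨⟨le_trans haD.1 hx.1.le, hx.2⟩, hx.1⟩⟩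

noncomputable def auxE (b : ℝ → ℝ) (α : ℝ) (t : ℝ) : ℝ :=
  Real.exp (2 * α * ∫ v in (0:ℝ)..t, b v)

noncomputable def auxJ (b σ : ℝ → ℝ) (α : ℝ) (s : ℝ) : ℝ :=
  ∫ u in (0:ℝ)..s, σ u ^ 2 / auxE b α u

section aux
variable {b σ : ℝ → ℝ} {α : ℝ} {D : Set ℝ}

lemma auxEpos (t : ℝ) : 0 < auxE b α t := Real.exp_pos _

lemma auxContInner (hb : ContinuousOn b D) (hσ : ContinuousOn σ D)
    {t : ℝ} (ht0 : 0 ≤ t) (hIcc : Icc 0 t ⊆ D) :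
    ContinuousOn (fun u => σ u ^ 2 / auxE b α u) (Icc 0 t) := by
  have hbc := hb.mono hIcc
  have hσc := hσ.mono hIcc
  have hF : ContinuousOn (fun s => ∫ v in (0:ℝ)..s, b v) (Icc 0 t) := by
    have h1 := intervalIntegral.continuousOn_primitive_interval
      (f := b) (μ := MeasureTheory.volume) (a := 0) (b := t)
      (by rw [uIcc_of_le ht0]; exact hbc.integrableOn_Icc)
    rwa [uIcc_of_le ht0] at h1
  have hE : ContinuousOn (auxE b α) (Icc 0 t) :=
    Real.continuous_exp.comp_continuousOn (continuousOn_const.mul hF)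
  exact (hσc.pow 2).div hE (fun u _ => (auxEpos u).ne')

lemma auxContJ (hb : ContinuousOn b D) (hσ : ContinuousOn σ D)
    {t : ℝ} (ht0 : 0 ≤ t) (hIcc : Icc 0 t ⊆ D) :
    ContinuousOn (auxJ b σ α) (Icc 0 t) := by
  have h1 := intervalIntegral.continuousOn_primitive_interval
    (f := fun u => σ u ^ 2 / auxE b α u) (μ := MeasureTheory.volume) (a := 0) (b := t)
    (by rw [uIcc_of_le ht0]; exact (auxContInner hb hσ ht0 hIcc).integrableOn_Icc)
  rwa [uIcc_of_le ht0] at h1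

lemma auxContPhi (hb : ContinuousOn b D) (hσ : ContinuousOn σ D)
    (hσpos : ∀ t ∈ D, 0 < σ t)
    {t : ℝ} (ht0 : 0 ≤ t) (hIcc : Icc 0 t ⊆ D) :
    ContinuousOn (fun s => (b s ^ 2 / σ s ^ 2 * auxE b α s) * auxJ b σ α s) (Icc 0 t) := by
  have hbc := hb.mono hIcc
  have hσc := hσ.mono hIcc
  have hF : ContinuousOn (fun s => ∫ v in (0:ℝ)..s, b v) (Icc 0 t) := by
    have h1 := intervalIntegral.continuousOn_primitive_interval
      (f := b) (μ := MeasureTheory.volume) (a := 0) (b := t)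
      (by rw [uIcc_of_le ht0]; exact hbc.integrableOn_Icc)
    rwa [uIcc_of_le ht0] at h1
  have hE : ContinuousOn (auxE b α) (Icc 0 t) :=
    Real.continuous_exp.comp_continuousOn (continuousOn_const.mul hF)
  have hh : ContinuousOn (fun s => b s ^ 2 / σ s ^ 2 * auxE b α s) (Icc 0 t) :=
    ((hbc.pow 2).div (hσc.pow 2)
      (fun s hs => pow_ne_zero 2 (hσpos s (hIcc hs)).ne')).mul hE
  exact hh.mul (auxContJ hb hσ ht0 hIcc)

lemma fisherInfo_eq (hord : ∀ a ∈ D, Icc 0 a ⊆ D)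
    (hb : ContinuousOn b D) (t : ℝ) (ht0 : 0 ≤ t) (ht : t ∈ D) :
    fisherInfo b σ α t = ∫ s in (0:ℝ)..t,
      (b s ^ 2 / σ s ^ 2 * auxE b α s) * auxJ b σ α s := by
  simp only [auxE, auxJ]
  have hIcc : Icc 0 t ⊆ D := hord t ht
  apply intervalIntegral.integral_congr
  intro s hs
  rw [uIcc_of_le ht0] at hs
  have hs0 : 0 ≤ s := hs.1
  have hsIcc : Icc 0 s ⊆ D := (Icc_subset_Icc le_rfl hs.2).trans hIcc
  have hinner : (∫ u in (0:ℝ)..s, σ u ^ 2 * Real.exp (2 * α * ∫ v in u..s, b v))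
      = Real.exp (2*α* ∫ v in (0:ℝ)..s, b v) *
        ∫ u in (0:ℝ)..s, σ u ^ 2 / Real.exp (2*α* ∫ v in (0:ℝ)..u, b v) := by
    rw [← intervalIntegral.integral_const_mul]
    apply intervalIntegral.integral_congr
    intro u hu
    rw [uIcc_of_le hs0] at hu
    have hbs : IntervalIntegrable b MeasureTheory.volume 0 s :=
      ContinuousOn.intervalIntegrable (by rw [uIcc_of_le hs0]; exact hb.mono hsIcc)
    have hbu : IntervalIntegrable b MeasureTheory.volume 0 u :=
      ContinuousOn.intervalIntegrable (by
        rw [uIcc_of_le hu.1]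
        exact hb.mono ((Icc_subset_Icc le_rfl hu.2).trans hsIcc))
    have hsub : (∫ v in u..s, b v) = (∫ v in (0:ℝ)..s, b v) - ∫ v in (0:ℝ)..u, b v :=
      (intervalIntegral.integral_interval_sub_left hbs hbu).symm
    dsimp only
    rw [hsub, mul_sub, Real.exp_sub]
    ring
  dsimp only
  rw [hinner]
  ring

lemma main_aux (hD0 : D ⊆ Ici 0)
    (hord : ∀ a ∈ D, Icc 0 a ⊆ D)
    {L : Filter ℝ} (hL : L.HasBasis (· ∈ D) (fun a => D ∩ Ioi a))
    (hne : ∀ a ∈ D, (D ∩ Ioi a).Nonempty)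
    {C : ℝ} (hC : C ≠ 0)
    (hb : ContinuousOn b D) (hσ : ContinuousOn σ D)
    (hσpos : ∀ t ∈ D, 0 < σ t)
    (hlim : Tendsto
      (fun t : ℝ => b t / (σ t) ^ 2 * Real.exp (2 * α * ∫ w in (0:ℝ)..t, b w))
      L (𝓝 C)) :
    Tendsto (fisherInfo b σ α) L atTop ↔
      Tendsto (fun t : ℝ => ∫ v in (0:ℝ)..t, |b v|) L atTop := by
  have hLne : L.NeBot := hL.neBot_iff.mpr (fun hi => hne _ hi)
  have hC0 : 0 < |C| := abs_pos.mpr hC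
  set g : ℝ → ℝ := fun t => b t / σ t ^ 2 * auxE b α t with hgdef
  set A : ℝ → ℝ := fun t => ∫ v in (0:ℝ)..t, |b v| with hAdef
  set φ : ℝ → ℝ := fun s => (b s ^ 2 / σ s ^ 2 * auxE b α s) * auxJ b σ α s with hφdef
  have hglim : Tendsto g L (𝓝 C) := hlim
  have hEpos : ∀ s, 0 < auxE b α s := fun s => Real.exp_pos _
  have hhg : ∀ s, b s ^ 2 / σ s ^ 2 * auxE b α s = |b s| * |g s| := by
    intro s
    have h1 : b s ^ 2 / σ s ^ 2 * auxE b α s = b s * g s := by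
      rw [hgdef]; ring
    have h2 : 0 ≤ b s ^ 2 / σ s ^ 2 * auxE b α s := by
      have := hEpos s; positivity
    rw [h1] at h2 ⊢
    rw [← abs_of_nonneg h2, abs_mul]
  have hAint : ∀ ⦃x y t : ℝ⦄, t ∈ D → 0 ≤ x → x ≤ y → y ≤ t →
      IntervalIntegrable (fun v => |b v|) MeasureTheory.volume x y := by
    intro x y t ht hx hxy hyt
    apply ContinuousOn.intervalIntegrable
    rw [uIcc_of_le hxy]
    exact (hb.abs.mono (hord t ht)).mono (Icc_subset_Icc hx hyt)
  have hφint : ∀ ⦃x y t : ℝ⦄, t ∈ D → 0 ≤ x → x ≤ y → y ≤ t →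
      IntervalIntegrable φ MeasureTheory.volume x y := by
    intro x y t ht hx hxy hyt
    apply ContinuousOn.intervalIntegrable
    rw [uIcc_of_le hxy]
    exact (auxContPhi hb hσ hσpos (hx.trans (hxy.trans hyt)) (hord t ht)).mono
      (Icc_subset_Icc hx hyt)
  have hIint : ∀ ⦃x y t : ℝ⦄, t ∈ D → 0 ≤ x → x ≤ y → y ≤ t →
      IntervalIntegrable (fun u => σ u ^ 2 / auxE b α u) MeasureTheory.volume x y := by
    intro x y t ht hx hxy hyt
    apply ContinuousOn.intervalIntegrable
    rw [uIcc_of_le hxy]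
    exact (auxContInner hb hσ (hx.trans (hxy.trans hyt)) (hord t ht)).mono
      (Icc_subset_Icc hx hyt)
  have hconstint : ∀ (c : ℝ) ⦃x y t : ℝ⦄, t ∈ D → 0 ≤ x → x ≤ y → y ≤ t →
      IntervalIntegrable (fun v => c * |b v|) MeasureTheory.volume x y :=
    fun c x y t ht hx hxy hyt => (hAint ht hx hxy hyt).const_mul c
  have hAsub : ∀ ⦃s t : ℝ⦄, t ∈ D → 0 ≤ s → s ≤ t →
      A t - A s = ∫ v in s..t, |b v| := by
    intro s t ht hs hst
    exact intervalIntegral.integral_interval_sub_left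
      (hAint ht le_rfl (hs.trans hst) le_rfl) (hAint ht le_rfl hs hst)
  have hJsub : ∀ ⦃s t : ℝ⦄, t ∈ D → 0 ≤ s → s ≤ t →
      auxJ b σ α t - auxJ b σ α s = ∫ u in s..t, σ u ^ 2 / auxE b α u := by
    intro s t ht hs hst
    exact intervalIntegral.integral_interval_sub_left
      (hIint ht le_rfl (hs.trans hst) le_rfl) (hIint ht le_rfl hs hst)
  have hφnn : ∀ s : ℝ, 0 ≤ s → 0 ≤ φ s := by
    intro s hs0
    apply mul_nonneg
    · have := hEpos s; positivity
    · exact intervalIntegral.integral_nonneg hs0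
        (fun u _ => div_nonneg (sq_nonneg _) (hEpos u).le)
  have hg2 := Metric.tendsto_nhds.mp hglim (|C|/2) (by positivity)
  rw [hL.eventually_iff] at hg2
  obtain ⟨a, haD, hga⟩ := hg2
  obtain ⟨t₀, ht₀D, ht₀a⟩ := hne a haD
  have ht₀pos : 0 < t₀ := lt_of_le_of_lt (hD0 haD) ht₀a
  have hgood : ∀ s ∈ D, t₀ ≤ s → |C|/2 ≤ |g s| ∧ |g s| ≤ 2 * |C| := by
    intro s hs hst
    have hd : |g s - C| < |C| / 2 := by
      have := hga ⟨hs, lt_of_lt_of_le ht₀a hst⟩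
      rwa [Real.dist_eq] at this
    constructor
    · have h4 : |C| - |g s| ≤ |C - g s| := abs_sub_abs_le_abs_sub _ _
      rw [abs_sub_comm] at h4
      linarith
    · have h4 : |g s| - |C| ≤ |g s - C| := abs_sub_abs_le_abs_sub _ _
      linarith
  have hmemD : ∀ ⦃s t : ℝ⦄, t ∈ D → s ∈ Icc t₀ t → s ∈ D := by
    intro s t ht hs
    exact hord t ht ⟨ht₀pos.le.trans hs.1, hs.2⟩
  have hIeq : ∀ t ∈ D, fisherInfo b σ α t = ∫ s in (0:ℝ)..t, φ s :=
    fun t ht => fisherInfo_eq hord hb t (hD0 ht) ht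
  have hIsplit : ∀ t ∈ D, t₀ ≤ t →
      fisherInfo b σ α t = (∫ s in (0:ℝ)..t₀, φ s) + ∫ s in t₀..t, φ s := by
    intro t ht htt
    rw [hIeq t ht]
    exact (intervalIntegral.integral_add_adjacent_intervals
      (hφint ht le_rfl ht₀pos.le htt) (hφint ht ht₀pos.le htt le_rfl)).symm
  have hI0nn : 0 ≤ ∫ s in (0:ℝ)..t₀, φ s :=
    intervalIntegral.integral_nonneg ht₀pos.le (fun u hu => hφnn u hu.1)
  constructor
  · intro hI
    by_contra hA'
    rw [Filter.tendsto_atTop] at hA'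
    push_neg at hA'
    obtain ⟨B, hB⟩ := hA'
    have hAb : ∀ s ∈ D, A s < B := by
      intro s hs
      obtain ⟨t, ⟨htD, hts⟩, hAt⟩ := (hL.frequently_iff.mp hB) s hs
      have h1 : A s ≤ A t := by
        have h2 := hAsub htD (hD0 hs) hts.le
        have h3 : 0 ≤ ∫ v in s..t, |b v| :=
          intervalIntegral.integral_nonneg hts.le (fun u _ => abs_nonneg _)
        linarith
      linarith
    have hAnn : ∀ s : ℝ, 0 ≤ s → 0 ≤ A s :=
      fun s hs => intervalIntegral.integral_nonneg hs (fun u _ => abs_nonneg _)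
    have hB0 : 0 < B := lt_of_le_of_lt (hAnn t₀ ht₀pos.le) (hAb t₀ ht₀D)
    have hσE : ∀ s ∈ D, t₀ ≤ s → σ s ^ 2 / auxE b α s ≤ 2 / |C| * |b s| := by
      intro s hs hst
      obtain ⟨hg1, -⟩ := hgood s hs hst
      have hσs := hσpos s hs
      have hEs := hEpos s
      have hX : 0 ≤ σ s ^ 2 / auxE b α s := div_nonneg (sq_nonneg _) hEs.le
      have hid : σ s ^ 2 / auxE b α s * |g s| = |b s| := by
        rw [hgdef]
        dsimp only
        rw [abs_mul, abs_div, abs_of_pos hEs, abs_of_nonneg (sq_nonneg (σ s))]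
        field_simp
      rw [← hid]
      have h6 : σ s ^ 2 / auxE b α s * (|C| / 2) ≤ σ s ^ 2 / auxE b α s * |g s| :=
        mul_le_mul_of_nonneg_left hg1 hX
      have h7 : 2 / |C| * (σ s ^ 2 / auxE b α s * (|C| / 2)) = σ s ^ 2 / auxE b α s := by
        field_simp
        try ring
      have h8 : 2 / |C| * (σ s ^ 2 / auxE b α s * (|C| / 2))
          ≤ 2 / |C| * (σ s ^ 2 / auxE b α s * |g s|) :=
        mul_le_mul_of_nonneg_left h6 (by positivity)
      linarith
    set M : ℝ := auxJ b σ α t₀ + 2 / |C| * B with hMdef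
    have hJt₀nn : 0 ≤ auxJ b σ α t₀ :=
      intervalIntegral.integral_nonneg ht₀pos.le
        (fun u _ => div_nonneg (sq_nonneg _) (hEpos u).le)
    have hM0 : 0 ≤ M := by positivity
    have hJb : ∀ s ∈ D, t₀ ≤ s → auxJ b σ α s ≤ M := by
      intro s hs hst
      have h1 : (∫ u in t₀..s, σ u ^ 2 / auxE b α u) ≤ ∫ u in t₀..s, 2 / |C| * |b u| := by
        apply intervalIntegral.integral_mono_on hst (hIint hs ht₀pos.le hst le_rfl)
          (hconstint _ hs ht₀pos.le hst le_rfl)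
        intro u hu
        exact hσE u (hmemD hs hu) hu.1
      have h2 : (∫ u in t₀..s, 2 / |C| * |b u|) = 2 / |C| * (A s - A t₀) := by
        rw [intervalIntegral.integral_const_mul, ← hAsub hs ht₀pos.le hst]
      have h3 : 2 / |C| * (A s - A t₀) ≤ 2 / |C| * B := by
        apply mul_le_mul_of_nonneg_left _ (by positivity)
        have := hAb s hs
        have := hAnn t₀ ht₀pos.le
        linarith
      have h4 := hJsub hs ht₀pos.le hst
      rw [hMdef]
      linarith
    set R : ℝ := (∫ s in (0:ℝ)..t₀, φ s) + 2 * |C| * M * B with hRdef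
    have hR : ∀ t ∈ D, t₀ ≤ t → fisherInfo b σ α t ≤ R := by
      intro t ht htt
      rw [hIsplit t ht htt]
      have h1 : (∫ s in t₀..t, φ s) ≤ ∫ s in t₀..t, 2 * |C| * M * |b s| := by
        apply intervalIntegral.integral_mono_on htt (hφint ht ht₀pos.le htt le_rfl)
          (hconstint _ ht ht₀pos.le htt le_rfl)
        intro s hs
        have hsD := hmemD ht hs
        obtain ⟨-, hg2'⟩ := hgood s hsD hs.1
        have hJs := hJb s hsD hs.1
        have hJnn : 0 ≤ auxJ b σ α s :=
          intervalIntegral.integral_nonneg (ht₀pos.le.trans hs.1)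
            (fun u _ => div_nonneg (sq_nonneg _) (hEpos u).le)
        have habs : 0 ≤ |b s| := abs_nonneg _
        have hgabs : 0 ≤ |g s| := abs_nonneg _
        calc φ s = |b s| * |g s| * auxJ b σ α s := by rw [hφdef]; dsimp only; rw [hhg]
        _ ≤ |b s| * (2 * |C|) * M := by
            apply mul_le_mul (mul_le_mul_of_nonneg_left hg2' habs) hJs hJnn
            positivity
        _ = 2 * |C| * M * |b s| := by ring
      have h2 : (∫ s in t₀..t, 2 * |C| * M * |b s|) = 2 * |C| * M * (A t - A t₀) := by
        rw [intervalIntegral.integral_const_mul, ← hAsub ht ht₀pos.le htt]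
      have h3 : 2 * |C| * M * (A t - A t₀) ≤ 2 * |C| * M * B := by
        apply mul_le_mul_of_nonneg_left _ (by positivity)
        have := hAb t ht
        have := hAnn t₀ ht₀pos.le
        linarith
      rw [hRdef]
      linarith
    have hev : ∀ᶠ t in L, fisherInfo b σ α t ≤ R :=
      hL.eventually_iff.mpr ⟨t₀, ht₀D, fun {t} htt => hR t htt.1 htt.2.le⟩
    have hev2 : ∀ᶠ t in L, R + 1 ≤ fisherInfo b σ α t :=
      hI.eventually (eventually_ge_atTop (R + 1))
    obtain ⟨t, h1, h2⟩ := (hev.and hev2).exists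
    linarith
  · intro hA
    have hm : 0 < auxJ b σ α t₀ := by
      show 0 < ∫ u in (0:ℝ)..t₀, σ u ^ 2 / auxE b α u
      apply intervalIntegral.intervalIntegral_pos_of_pos_on
        (hIint ht₀D le_rfl ht₀pos.le le_rfl) _ ht₀pos
      intro x hx
      exact div_pos (pow_pos (hσpos x (hord t₀ ht₀D ⟨hx.1.le, hx.2.le⟩)) 2) (hEpos x)
    set c : ℝ := |C| / 2 * auxJ b σ α t₀ with hcdef
    have hc0 : 0 < c := by positivity
    have key : ∀ t ∈ D, t₀ ≤ t → c * A t - c * A t₀ ≤ fisherInfo b σ α t := by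
      intro t ht htt
      have h1 : (∫ s in t₀..t, c * |b s|) ≤ ∫ s in t₀..t, φ s := by
        apply intervalIntegral.integral_mono_on htt (hconstint _ ht ht₀pos.le htt le_rfl)
          (hφint ht ht₀pos.le htt le_rfl)
        intro s hs
        have hsD := hmemD ht hs
        obtain ⟨hg1, -⟩ := hgood s hsD hs.1
        have hJs : auxJ b σ α t₀ ≤ auxJ b σ α s := by
          have h2 := hJsub hsD ht₀pos.le hs.1
          have h3 : 0 ≤ ∫ u in t₀..s, σ u ^ 2 / auxE b α u :=
            intervalIntegral.integral_nonneg hs.1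
              (fun u _ => div_nonneg (sq_nonneg _) (hEpos u).le)
          linarith
        have habs : 0 ≤ |b s| := abs_nonneg _
        calc c * |b s| = |b s| * (|C| / 2) * auxJ b σ α t₀ := by rw [hcdef]; ring
        _ ≤ |b s| * |g s| * auxJ b σ α s := by
            apply mul_le_mul (mul_le_mul_of_nonneg_left hg1 habs) hJs hm.le
            positivity
        _ = φ s := by rw [hφdef]; dsimp only; rw [hhg]
      have h2 : (∫ s in t₀..t, c * |b s|) = c * (A t - A t₀) := by
        rw [intervalIntegral.integral_const_mul, ← hAsub ht ht₀pos.le htt]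
      rw [hIsplit t ht htt]
      have h4 : 0 ≤ ∫ s in t₀..t, φ s := by
        apply intervalIntegral.integral_nonneg htt
        intro u hu
        exact hφnn u (ht₀pos.le.trans hu.1)
      nlinarith
    apply tendsto_atTop_mono' L
      (hL.eventually_iff.mpr ⟨t₀, ht₀D, fun {t} htt => key t htt.1 htt.2.le⟩)
    have h5 : Tendsto (fun t => c * A t) L atTop := hA.const_mul_atTop hc0
    exact tendsto_atTop_add_const_right L (-(c * A t₀)) h5 |>.congr
      (fun t => by ring)

end aux

/-- Under condition (2.6), the Fisher information tends to infinity as `t ↑ T`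
iff `∫₀ᵗ |b(v)| dv` tends to infinity. -/
theorem fisher_atTop_iff_intAbs_atTop (T : EReal) (hT : 0 < T)
    (b σ : ℝ → ℝ) (α : ℝ) (C : ℝ) (hC : C ≠ 0)
    (hb : ContinuousOn b {t : ℝ | 0 ≤ t ∧ (t : EReal) < T})
    (hσ : ContinuousOn σ {t : ℝ | 0 ≤ t ∧ (t : EReal) < T})
    (hσpos : ∀ t : ℝ, 0 ≤ t → (t : EReal) < T → 0 < σ t)
    (hlim : Tendsto
      (fun t : ℝ => b t / (σ t) ^ 2 * Real.exp (2 * α * ∫ w in (0:ℝ)..t, b w))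
      (upFilter T) (𝓝 C)) :
    Tendsto (fisherInfo b σ α) (upFilter T) atTop ↔
      Tendsto (fun t : ℝ => ∫ v in (0:ℝ)..t, |b v|) (upFilter T) atTop := by
  revert hlim hσpos hσ hb hT
  induction T using EReal.rec with
  | bot => intro hT; exact absurd hT (by simp)
  | coe c =>
    intro hT hb hσ hσpos hlim
    have hc : 0 < c := by exact_mod_cast hT
    have hDset : {t : ℝ | 0 ≤ t ∧ (t : EReal) < (c : EReal)} = Ico (0:ℝ) c := by
      ext t
      simp only [mem_setOf_eq, mem_Ico, EReal.coe_lt_coe_iff]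
    rw [hDset] at hb hσ
    rw [upFilter_coe] at hlim ⊢
    exact main_aux (D := Ico (0:ℝ) c) (fun x hx => hx.1)
      (fun a ha x hx => ⟨hx.1, lt_of_le_of_lt hx.2 ha.2⟩)
      (basis_coe hc)
      (fun a ha => ⟨(a + c) / 2, ⟨⟨by linarith [ha.1], by linarith [ha.2]⟩,
        by simp only [mem_Ioi]; linarith [ha.2]⟩⟩)
      hC hb hσ
      (fun t ht => hσpos t ht.1 (by exact_mod_cast ht.2)) hlim
  | top =>
    intro hT hb hσ hσpos hlim
    have hDset : {t : ℝ | 0 ≤ t ∧ (t : EReal) < ⊤} = Ici (0:ℝ) := by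
      ext t
      simp only [mem_setOf_eq, mem_Ici, EReal.coe_lt_top, and_true]
    rw [hDset] at hb hσ
    rw [upFilter_top] at hlim ⊢
    exact main_aux (D := Ici (0:ℝ)) (fun x hx => hx)
      (fun a _ x hx => hx.1)
      basis_top
      (fun a _ => ⟨max a 0 + 1,
        ⟨by simp only [mem_Ici]; have := le_max_right a 0; linarith,
         by simp only [mem_Ioi]; have := le_max_left a 0; linarith⟩⟩)
      hC hb hσ
      (fun t ht => hσpos t ht (EReal.coe_lt_top t)) hlim
end

section
/- Let T ∈ (0,∞], let b : [0,T) → ℝ and σ : [0,T) → (0,∞) be continuous, let α ∈ ℝ, and suppose lim_{t↑T} (b(t)/σ(t)²)·exp{2α∫₀ᵗ b(w) dw} = C for some C ∈ ℝ with C ≠ 0. Then lim_{t↑T} ∫₀ᵗ |b(v)| dv = ∞ if and only if lim_{t↑T} ∫₀ᵗ σ(s)²·exp{−2α∫₀ˢ b(v) dv} ds = ∞. -/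
open MeasureTheory Filter Set Topology intervalIntegral

lemma mem_upFilter_of (T : EReal) {t₁ : ℝ} (h : (t₁ : EReal) < T) :
    {s : ℝ | t₁ < s ∧ (s : EReal) < T} ∈ upFilter T := by
  have h1 : Ioi (t₁ : EReal) ∩ Iio T ∈ 𝓝[<] T :=
    inter_mem (nhdsWithin_le_nhds ((isOpen_Ioi).mem_nhds h)) self_mem_nhdsWithin
  refine Filter.mem_comap.2 ⟨_, h1, ?_⟩
  intro s hs
  simpa [EReal.coe_lt_coe_iff] using hs

lemma upFilter_exists (T : EReal) (hT : 0 < T) {A : Set ℝ} (hA : A ∈ upFilter T) :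
    ∃ t₀ : ℝ, 0 ≤ t₀ ∧ (t₀ : EReal) < T ∧ ∀ s : ℝ, t₀ ≤ s → (s : EReal) < T → s ∈ A := by
  rcases Filter.mem_comap.1 hA with ⟨V, hV, hVA⟩
  rcases mem_nhdsWithin.1 hV with ⟨U, hUopen, hTU, hUV⟩
  rcases exists_Ioc_subset_of_mem_nhds' (hUopen.mem_nhds hTU)
    (lt_of_lt_of_le (by simp : (⊥:EReal) < 0) hT.le) with ⟨a, haT, haU⟩
  have hmax : max a 0 < T := max_lt haT.2 hT
  rcases exists_between hmax with ⟨c, hc1, hc2⟩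
  have hcbot : c ≠ ⊥ := by
    intro h; rw [h] at hc1; exact absurd hc1 (by simp)
  have hctop : c ≠ ⊤ := by
    intro h; rw [h] at hc2; exact absurd hc2 (by simp)
  lift c to ℝ using ⟨hctop, hcbot⟩
  refine ⟨c, ?_, hc2, ?_⟩
  · have : (0:EReal) < (c:EReal) := lt_of_le_of_lt (le_max_right a 0) hc1
    exact_mod_cast this.le
  · intro s hcs hsT
    apply hVA; apply hUV
    refine ⟨haU ⟨?_, hsT.le⟩, hsT⟩
    refine lt_of_le_of_lt (le_max_left a 0) (lt_of_lt_of_le hc1 ?_)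
    show (c:EReal) ≤ (s:EReal)
    exact_mod_cast hcs

lemma aux_tendsto (l : Filter ℝ) (F G : ℝ → ℝ) {c : ℝ} (hc : 0 < c) (d : ℝ)
    (h : ∀ᶠ t in l, d + c * F t ≤ G t) (hF : Tendsto F l atTop) :
    Tendsto G l atTop :=
  tendsto_atTop_mono' l h
    (tendsto_atTop_add_const_left l d (hF.const_mul_atTop hc))

/-- Under condition (2.6), `∫₀ᵗ |b(v)| dv → ∞` as `t ↑ T` iff
`∫₀ᵗ σ(s)² exp{−2α ∫₀ˢ b(v) dv} ds → ∞` as `t ↑ T`. -/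
theorem intAbs_atTop_iff_intSigma_atTop (T : EReal) (hT : 0 < T)
    (b σ : ℝ → ℝ) (α : ℝ) (C : ℝ) (hC : C ≠ 0)
    (hb : ContinuousOn b {t : ℝ | 0 ≤ t ∧ (t : EReal) < T})
    (hσ : ContinuousOn σ {t : ℝ | 0 ≤ t ∧ (t : EReal) < T})
    (hσpos : ∀ t : ℝ, 0 ≤ t → (t : EReal) < T → 0 < σ t)
    (hlim : Tendsto
      (fun t : ℝ => b t / (σ t) ^ 2 * Real.exp (2 * α * ∫ w in (0:ℝ)..t, b w))
      (upFilter T) (𝓝 C)) :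
    Tendsto (fun t : ℝ => ∫ v in (0:ℝ)..t, |b v|) (upFilter T) atTop ↔
      Tendsto
        (fun t : ℝ =>
          ∫ s in (0:ℝ)..t, (σ s) ^ 2 * Real.exp (-(2 * α) * ∫ v in (0:ℝ)..s, b v))
        (upFilter T) atTop := by
  set S : Set ℝ := {t : ℝ | 0 ≤ t ∧ (t : EReal) < T} with hS
  set B : ℝ → ℝ := fun s => ∫ v in (0:ℝ)..s, b v with hB
  set g : ℝ → ℝ := fun s => (σ s) ^ 2 * Real.exp (-(2 * α) * B s) with hg
  set r : ℝ → ℝ := fun s => b s / (σ s) ^ 2 * Real.exp (2 * α * B s) with hr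
  -- subinterval inclusion
  have hsub : ∀ t : ℝ, 0 ≤ t → (t : EReal) < T → Icc 0 t ⊆ S := by
    intro t ht0 htT s hs
    exact ⟨hs.1, lt_of_le_of_lt (by exact_mod_cast hs.2) htT⟩
  -- continuity of g on Icc 0 t
  have hgcont : ∀ t : ℝ, 0 ≤ t → (t : EReal) < T → ContinuousOn g (Icc 0 t) := by
    intro t ht0 htT
    have hbc : ContinuousOn b (Icc 0 t) := hb.mono (hsub t ht0 htT)
    have hBc : ContinuousOn B (Icc 0 t) := by
      have := intervalIntegral.continuousOn_primitive_interval
        (f := b) (a := (0:ℝ)) (b := t) (μ := volume)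
        ((hbc.mono (by rw [uIcc_of_le ht0])).integrableOn_compact isCompact_uIcc)
      rwa [uIcc_of_le ht0] at this
    exact ((hσ.mono (hsub t ht0 htT)).pow 2).mul
      ((Real.continuous_exp.comp_continuousOn) ((continuousOn_const).mul hBc))
  have hbic : ∀ t : ℝ, 0 ≤ t → (t : EReal) < T → ContinuousOn (fun s => |b s|) (Icc 0 t) :=
    fun t ht0 htT => (hb.mono (hsub t ht0 htT)).abs
  -- locate t₀
  have hev1 : {s : ℝ | dist (r s) C < |C| / 2} ∈ upFilter T :=
    hlim (Metric.ball_mem_nhds C (by positivity))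
  have h0T : ((0:ℝ) : EReal) < T := by exact_mod_cast hT
  have hev2 := mem_upFilter_of T h0T
  obtain ⟨t₀, ht₀0, ht₀T, ht₀⟩ := upFilter_exists T hT (inter_mem hev1 hev2)
  -- pointwise comparison on [t₀, T)
  have key : ∀ s : ℝ, t₀ ≤ s → (s : EReal) < T →
      (|C| / 2) * g s ≤ |b s| ∧ |b s| ≤ (3 * |C| / 2) * g s := by
    intro s hs hsT
    obtain ⟨hd, hs0, _⟩ := ht₀ s hs hsT
    have hs0' : 0 ≤ s := ht₀0.trans hs
    have hσs : 0 < σ s := hσpos s hs0' hsT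
    have hbg : |b s| = |r s| * g s := by
      have hexp : Real.exp (2 * α * B s) * Real.exp (-(2 * α) * B s) = 1 := by
        rw [← Real.exp_add]
        norm_num
      have : r s * g s = b s := by
        calc r s * g s
            = (b s / σ s ^ 2 * σ s ^ 2) * (Real.exp (2 * α * B s) * Real.exp (-(2 * α) * B s)) := by
              rw [hr, hg]; ring
          _ = b s := by
              rw [hexp, div_mul_cancel₀ _ (by positivity : (σ s : ℝ) ^ 2 ≠ 0), mul_one]
      rw [← this, abs_mul, abs_of_nonneg (le_of_lt (by positivity : (0:ℝ) < g s))]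
    have hrs : |C| / 2 ≤ |r s| ∧ |r s| ≤ 3 * |C| / 2 := by
      simp only [mem_setOf_eq, Real.dist_eq] at hd
      constructor
      · have := abs_sub_abs_le_abs_sub C (r s)
        rw [abs_sub_comm] at this
        linarith
      · have := abs_sub_abs_le_abs_sub (r s) C
        linarith
    have hgpos : (0:ℝ) ≤ g s := le_of_lt (by positivity)
    constructor
    · rw [hbg]; exact mul_le_mul_of_nonneg_right hrs.1 hgpos
    · rw [hbg]; exact mul_le_mul_of_nonneg_right hrs.2 hgpos
  -- integral comparison for t ∈ [t₀, T)
  have hsplit : ∀ t : ℝ, t₀ ≤ t → (t : EReal) < T →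
      ((∫ v in (0:ℝ)..t, |b v|) = (∫ v in (0:ℝ)..t₀, |b v|) + ∫ v in t₀..t, |b v|) ∧
      ((∫ s in (0:ℝ)..t, g s) = (∫ s in (0:ℝ)..t₀, g s) + ∫ s in t₀..t, g s) ∧
      (|C| / 2) * (∫ s in t₀..t, g s) ≤ (∫ v in t₀..t, |b v|) ∧
      (∫ v in t₀..t, |b v|) ≤ (3 * |C| / 2) * (∫ s in t₀..t, g s) := by
    intro t ht₀t htT
    have ht0 : 0 ≤ t := ht₀0.trans ht₀t
    have hIcc : Icc t₀ t ⊆ Icc 0 t := Icc_subset_Icc ht₀0 le_rfl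
    have hbi1 : IntervalIntegrable (fun v => |b v|) volume 0 t₀ := by
      apply ContinuousOn.intervalIntegrable
      rw [uIcc_of_le ht₀0]; exact hbic t₀ ht₀0 ht₀T
    have hbi2 : IntervalIntegrable (fun v => |b v|) volume t₀ t := by
      apply ContinuousOn.intervalIntegrable
      rw [uIcc_of_le ht₀t]; exact (hbic t ht0 htT).mono hIcc
    have hgi1 : IntervalIntegrable g volume 0 t₀ := by
      apply ContinuousOn.intervalIntegrable
      rw [uIcc_of_le ht₀0]; exact hgcont t₀ ht₀0 ht₀T
    have hgi2 : IntervalIntegrable g volume t₀ t := by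
      apply ContinuousOn.intervalIntegrable
      rw [uIcc_of_le ht₀t]; exact (hgcont t ht0 htT).mono hIcc
    have hmem : ∀ s ∈ Icc t₀ t, (s : EReal) < T := by
      intro s hs
      exact lt_of_le_of_lt (by exact_mod_cast hs.2) htT
    refine ⟨(integral_add_adjacent_intervals hbi1 hbi2).symm,
      (integral_add_adjacent_intervals hgi1 hgi2).symm, ?_, ?_⟩
    · rw [← intervalIntegral.integral_const_mul]
      apply intervalIntegral.integral_mono_on ht₀t (hgi2.const_mul _) hbi2
      intro s hs
      exact (key s hs.1 (hmem s hs)).1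
    · rw [← intervalIntegral.integral_const_mul]
      apply intervalIntegral.integral_mono_on ht₀t hbi2 (hgi2.const_mul _)
      intro s hs
      exact (key s hs.1 (hmem s hs)).2
  have habs : (0:ℝ) < |C| := abs_pos.2 hC
  set G : ℝ → ℝ := fun t => ∫ v in (0:ℝ)..t, |b v| with hGdef
  set F : ℝ → ℝ := fun t => ∫ s in (0:ℝ)..t, g s with hFdef
  have hevset : ∀ᶠ t in upFilter T, t₀ < t ∧ (t : EReal) < T := mem_upFilter_of T ht₀T
  constructor
  · -- G → ∞ ⇒ F → ∞
    intro hG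
    apply aux_tendsto (upFilter T) G F (c := 2 / (3 * |C|)) (by positivity)
      (F t₀ - (2 / (3 * |C|)) * G t₀) _ hG
    filter_upwards [hevset] with t ht
    obtain ⟨e1, e2, _, i2⟩ := hsplit t ht.1.le ht.2
    have : (2 / (3 * |C|)) * (∫ v in t₀..t, |b v|) ≤ ∫ s in t₀..t, g s := by
      rw [div_mul_eq_mul_div, div_le_iff₀ (by positivity)]
      calc 2 * ∫ v in t₀..t, |b v| ≤ 2 * ((3 * |C| / 2) * ∫ s in t₀..t, g s) := by linarith
        _ = (∫ s in t₀..t, g s) * (3 * |C|) := by ring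
    have hGt : G t = G t₀ + ∫ v in t₀..t, |b v| := e1
    have hFt : F t = F t₀ + ∫ s in t₀..t, g s := e2
    have hc : (2 / (3 * |C|)) * G t = (2 / (3 * |C|)) * G t₀ + (2 / (3 * |C|)) * ∫ v in t₀..t, |b v| := by
      rw [hGt]; ring
    linarith [this, hc, hFt]
  · -- F → ∞ ⇒ G → ∞
    intro hF
    apply aux_tendsto (upFilter T) F G (c := |C| / 2) (by positivity)
      (G t₀ - (|C| / 2) * F t₀) _ hF
    filter_upwards [hevset] with t ht
    obtain ⟨e1, e2, i1, _⟩ := hsplit t ht.1.le ht.2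
    have hGt : G t = G t₀ + ∫ v in t₀..t, |b v| := e1
    have hFt : F t = F t₀ + ∫ s in t₀..t, g s := e2
    have hc : (|C| / 2) * F t = (|C| / 2) * F t₀ + (|C| / 2) * ∫ s in t₀..t, g s := by
      rw [hFt]; ring
    linarith [i1, hc, hGt]
end

section
/- Let T ∈ (0,∞], let b : [0,T) → ℝ and σ : [0,T) → (0,∞) be continuous, let α ∈ ℝ, and suppose there exist constants c₁ > 0, c₂ > 0 and t₁ ∈ (0,T) such that c₁·|b(t)|·exp{2α∫₀ᵗ b(w) dw} ≤ σ(t)² ≤ c₂·|b(t)|·exp{2α∫₀ᵗ b(w) dw} for all t ∈ [t₁,T). Then for all t ∈ [t₁,T), I_α(t) − I_α(t₁) ≤ a₁·∫_{t₁}^t |b(u)| du + a₂·(∫_{t₁}^t |b(u)| du)², where a₁ := (1/c₁)·∫₀^{t₁} σ(u)²·exp{−2α∫₀ᵘ b(v) dv} du and a₂ := c₂/(2c₁). -/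
open MeasureTheory Filter Set Topology intervalIntegral

/-- Upper bound on the increment of the Fisher information under the two-sided bound
`c₁·|b(t)|·exp{2α∫₀ᵗ b} ≤ σ(t)² ≤ c₂·|b(t)|·exp{2α∫₀ᵗ b}` on `[t₁, T)`. -/
theorem fisher_increment_upper_bound (T : EReal) (hT : 0 < T)
    (b σ : ℝ → ℝ) (α : ℝ) (c₁ c₂ t₁ : ℝ)
    (hc₁ : 0 < c₁) (hc₂ : 0 < c₂) (ht₁ : 0 < t₁) (ht₁T : (t₁ : EReal) < T)
    (hb : ContinuousOn b {t : ℝ | 0 ≤ t ∧ (t : EReal) < T})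
    (hσ : ContinuousOn σ {t : ℝ | 0 ≤ t ∧ (t : EReal) < T})
    (hσpos : ∀ t : ℝ, 0 ≤ t → (t : EReal) < T → 0 < σ t)
    (hbound : ∀ t : ℝ, t₁ ≤ t → (t : EReal) < T →
      c₁ * |b t| * Real.exp (2 * α * ∫ w in (0:ℝ)..t, b w) ≤ (σ t) ^ 2 ∧
      (σ t) ^ 2 ≤ c₂ * |b t| * Real.exp (2 * α * ∫ w in (0:ℝ)..t, b w)) :
    ∀ t : ℝ, t₁ ≤ t → (t : EReal) < T →
      fisherInfo b σ α t - fisherInfo b σ α t₁ ≤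
        ((1 / c₁) *
            ∫ u in (0:ℝ)..t₁,
              (σ u) ^ 2 * Real.exp (-(2 * α) * ∫ v in (0:ℝ)..u, b v)) *
          (∫ u in t₁..t, |b u|)
        + (c₂ / (2 * c₁)) * (∫ u in t₁..t, |b u|) ^ 2 := by
  intro t ht₁t htT
  have h0t : (0:ℝ) ≤ t := le_trans ht₁.le ht₁t
  have h0t₁ : (0:ℝ) ≤ t₁ := ht₁.le
  -- the domain contains `Icc 0 t`
  have hsub : Icc (0:ℝ) t ⊆ {s : ℝ | 0 ≤ s ∧ (s : EReal) < T} := by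
    intro x hx
    exact ⟨hx.1, lt_of_le_of_lt (EReal.coe_le_coe_iff.mpr hx.2) htT⟩
  have hsub₁ : Icc (0:ℝ) t₁ ⊆ Icc (0:ℝ) t := Icc_subset_Icc le_rfl ht₁t
  have hbc : ContinuousOn b (Icc 0 t) := hb.mono hsub
  have hσc : ContinuousOn σ (Icc 0 t) := hσ.mono hsub
  have hσpos' : ∀ x ∈ Icc (0:ℝ) 
      t, 0 < σ x := fun x hx => hσpos x (hsub hx).1 (hsub hx).2
  -- interval integrability of `b` between points of `[0, t]`
  have hbint : ∀ u ∈ Icc (0:ℝ) t, ∀ s ∈ Icc (0:ℝ) t, IntervalIntegrable b volume u s := by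
    intro u hu s hs
    apply ContinuousOn.intervalIntegrable
    apply hbc.mono
    rw [show Icc (0:ℝ) t = uIcc 0 t by rw [uIcc_of_le h0t]]
    exact uIcc_subset_uIcc (by rwa [uIcc_of_le h0t]) (by rwa [uIcc_of_le h0t])
  -- abbreviations
  set E : ℝ → ℝ := fun s => Real.exp (2 * α * ∫ v in (0:ℝ)..s, b v) with hE_def
  set h : ℝ → ℝ := fun u => (σ u) ^ 2 * Real.exp (-(2 * α) * ∫ v in (0:ℝ)..u, b v) with hh_def
  have hEpos : ∀ s, 0 < E s := fun s => Real.exp_pos _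
  have hEh : ∀ u, E u * Real.exp (-(2 * α) * ∫ v in (0:ℝ)..u, b v) = 1 := by
    intro u
    rw [hE_def]
    simp only []
    rw [← Real.exp_add, show 2 * α * (∫ v in (0:ℝ)..u, b v) + -(2 * α) * (∫ v in (0:ℝ)..u, b v) = 0 by ring, Real.exp_zero]
  have hhnonneg : ∀ u, 0 ≤ h u := fun u =>
    mul_nonneg (sq_nonneg _) (Real.exp_pos _).le
  -- continuity of the primitive of b, hence of E and h
  have hprim : ContinuousOn (fun s => ∫ v in (0:ℝ)..s, b v) (Icc 0 t) := by
    have := intervalIntegral.continuousOn_primitive_interval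
      (f := b) (μ := volume) (a := (0:ℝ)) (b := t)
      ((hbc.mono (by rw [uIcc_of_le h0t])).integrableOn_compact (by rw [uIcc_of_le h0t]; exact isCompact_Icc))
    rwa [uIcc_of_le h0t] at this
  have hEc : ContinuousOn E (Icc 0 t) :=
    (Real.continuous_exp.comp_continuousOn (hprim.const_smul (2*α)))
  have hhc : ContinuousOn h (Icc 0 t) :=
    (hσc.pow 2).mul (Real.continuous_exp.comp_continuousOn (hprim.const_smul (-(2*α))))
  -- H, the primitive of h
  set H : ℝ → ℝ := fun s => ∫ u in (0:ℝ)..s, h u with hH_def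
  have hHc : ContinuousOn H (Icc 0 t) := by
    have := intervalIntegral.continuousOn_primitive_interval
      (f := h) (μ := volume) (a := (0:ℝ)) (b := t)
      ((hhc.mono (by rw [uIcc_of_le h0t])).integrableOn_compact (by rw [uIcc_of_le h0t]; exact isCompact_Icc))
    rwa [uIcc_of_le h0t] at this
  have hhint : ∀ u ∈ Icc (0:ℝ) t, ∀ s ∈ Icc (0:ℝ) t, IntervalIntegrable h volume u s := by
    intro u hu s hs
    apply ContinuousOn.intervalIntegrable
    apply hhc.mono
    rw [show Icc (0:ℝ) t = uIcc 0 t by rw [uIcc_of_le h0t]]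
    exact uIcc_subset_uIcc (by rwa [uIcc_of_le h0t]) (by rwa [uIcc_of_le h0t])
  -- rewrite the inner integral
  have hinner : ∀ s ∈ Icc (0:ℝ) t,
      (∫ u in (0:ℝ)..s, (σ u) ^ 2 * Real.exp (2 * α * ∫ v in u..s, b v)) = E s * H s := by
    intro s hs
    rw [hH_def, ← intervalIntegral.integral_const_mul]
    apply intervalIntegral.integral_congr
    intro u hu
    rw [uIcc_of_le hs.1] at hu
    have hu' : u ∈ Icc (0:ℝ) t := ⟨hu.1, le_trans hu.2 hs.2⟩
    have heq : (∫ v in u..s, b v) = (∫ v in (0:ℝ)..s, b v) - ∫ v in (0:ℝ)..u, b v :=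
      (intervalIntegral.integral_interval_sub_left
        (hbint 0 (left_mem_Icc.2 h0t) s hs) (hbint 0 (left_mem_Icc.2 h0t) u hu')).symm
    show (σ u) ^ 2 * Real.exp (2 * α * ∫ v in u..s, b v) = E s * h u
    rw [heq, hh_def, hE_def]
    simp only []
    rw [show 2 * α * ((∫ v in (0:ℝ)..s, b v) - ∫ v in (0:ℝ)..u, b v)
        = 2 * α * (∫ v in (0:ℝ)..s, b v) + -(2 * α) * (∫ v in (0:ℝ)..u, b v) by ring,
      Real.exp_add]
    ring
  -- the integrand F
  set F : ℝ → ℝ := fun s => (b s) ^ 2 / (σ s) ^ 2 * (E s * H s) with hF_def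
  have hFc : ContinuousOn F (Icc 0 t) := by
    apply ContinuousOn.mul
    · exact (hbc.pow 2).div (hσc.pow 2) (fun x hx => pow_ne_zero 2 (hσpos' x hx).ne')
    · exact hEc.mul hHc
  have hFint : ∀ u ∈ Icc (0:ℝ) t, ∀ s ∈ Icc (0:ℝ) t, IntervalIntegrable F volume u s := by
    intro u hu s hs
    apply ContinuousOn.intervalIntegrable
    apply hFc.mono
    rw [show Icc (0:ℝ) t = uIcc 0 t by rw [uIcc_of_le h0t]]
    exact uIcc_subset_uIcc (by rwa [uIcc_of_le h0t]) (by rwa [uIcc_of_le h0t])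
  -- fisherInfo as integral of F
  have hfish : ∀ τ, 0 ≤ τ → τ ≤ t → fisherInfo b σ α τ = ∫ s in (0:ℝ)..τ, F s := by
    intro τ h0τ hτt
    apply intervalIntegral.integral_congr
    intro s hs
    rw [uIcc_of_le h0τ] at hs
    have hs' : s ∈ Icc (0:ℝ) t := ⟨hs.1, le_trans hs.2 hτt⟩
    rw [hF_def]
    simp only []
    rw [hinner s hs']
  -- the increment
  have hdiff : fisherInfo b σ α t - fisherInfo b σ α t₁ = ∫ s in t₁..t, F s := by
    rw [hfish t h0t le_rfl, hfish t₁ h0t₁ ht₁t]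
    exact intervalIntegral.integral_interval_sub_left
      (hFint 0 (left_mem_Icc.2 h0t) t (right_mem_Icc.2 h0t))
      (hFint 0 (left_mem_Icc.2 h0t) t₁ ⟨h0t₁, ht₁t⟩)
  -- A and B
  set A : ℝ := ∫ u in (0:ℝ)..t₁, h u with hA_def
  have hAnonneg : 0 ≤ A :=
    intervalIntegral.integral_nonneg h0t₁ (fun u _ => hhnonneg u)
  set B : ℝ → ℝ := fun s => ∫ u in t₁..s, |b u| with hB_def
  have habsint : ∀ u ∈ Icc (0:ℝ) t, ∀ s ∈ Icc (0:ℝ) t,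
      IntervalIntegrable (fun x => |b x|) volume u s := fun u hu s hs => (hbint u hu s hs).abs
  have hBnonneg : ∀ s, t₁ ≤ s → 0 ≤ B s := fun s hs =>
    intervalIntegral.integral_nonneg hs (fun u _ => abs_nonneg _)
  have hBc : ContinuousOn B (Icc t₁ t) := by
    have := intervalIntegral.continuousOn_primitive_interval
      (f := fun x => |b x|) (μ := volume) (a := t₁) (b := t)
      (((hbc.mono (Icc_subset_Icc h0t₁ le_rfl)).abs.mono
        (by rw [uIcc_of_le ht₁t])).integrableOn_compact (by rw [uIcc_of_le ht₁t]; exact isCompact_Icc))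
    rwa [uIcc_of_le ht₁t] at this
  -- pointwise bound on F over [t₁, t]
  have hkey : ∀ s ∈ Icc t₁ t, F s ≤ A / c₁ * |b s| + c₂ / c₁ * (|b s| * B s) := by
    intro s hs
    have hs' : s ∈ Icc (0:ℝ) t := ⟨le_trans h0t₁ hs.1, hs.2⟩
    have hsT : (s : EReal) < T := (hsub hs').2
    have hbd := hbound s hs.1 hsT
    -- H s = A + ∫_{t₁}^s h
    have hHs : H s = A + ∫ u in t₁..s, h u := by
      rw [hH_def, hA_def]
      exact (intervalIntegral.integral_add_adjacent_intervals
        (hhint 0 (left_mem_Icc.2 h0t) t₁ ⟨h0t₁, ht₁t⟩)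
        (hhint t₁ ⟨h0t₁, ht₁t⟩ s hs')).symm
    -- bound the tail of H
    have htail : (∫ u in t₁..s, h u) ≤ c₂ * B s := by
      rw [hB_def]
      simp only []
      rw [← intervalIntegral.integral_const_mul]
      apply intervalIntegral.integral_mono_on hs.1
        (hhint t₁ ⟨h0t₁, ht₁t⟩ s hs')
        ((habsint t₁ ⟨h0t₁, ht₁t⟩ s hs').const_mul c₂)
      intro u hu
      have hu' : u ∈ Icc (0:ℝ) t := ⟨le_trans h0t₁ hu.1, le_trans hu.2 hs.2⟩
      have hbu := (hbound u hu.1 (hsub hu').2).2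
      have := mul_le_mul_of_nonneg_right hbu (Real.exp_pos (-(2 * α) * ∫ v in (0:ℝ)..u, b v)).le
      calc h u = (σ u) ^ 2 * Real.exp (-(2 * α) * ∫ v in (0:ℝ)..u, b v) := rfl
        _ ≤ c₂ * |b u| * E u * Real.exp (-(2 * α) * ∫ v in (0:ℝ)..u, b v) := this
        _ = c₂ * |b u| * (E u * Real.exp (-(2 * α) * ∫ v in (0:ℝ)..u, b v)) := by ring
        _ = c₂ * |b u| := by rw [hEh u]; ring
    have hHnonneg : 0 ≤ H s :=
      intervalIntegral.integral_nonneg hs'.1 (fun u _ => hhnonneg u)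
    -- bound b²/σ² · E
    have hmain : (b s) ^ 2 / (σ s) ^ 2 * E s ≤ |b s| / c₁ := by
      rcases eq_or_ne (b s) 0 with hbz | hbz
      · rw [hbz]
        simp
      · have hbabs : 0 < |b s| := abs_pos.2 hbz
        have hden : 0 < c₁ * |b s| * E s := by positivity
        have hσ2 : (0:ℝ) < (σ s) ^ 2 := pow_pos (hσpos' s hs') 2
        have h1 : (b s) ^ 2 / (σ s) ^ 2 ≤ (b s) ^ 2 / (c₁ * |b s| * E s) :=
          div_le_div_of_nonneg_left (sq_nonneg _) hden hbd.1
        have h2 : (b s) ^ 2 / (c₁ * |b s| * E s) * E s = |b s| / c₁ := by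
          rw [div_mul_eq_mul_div, div_eq_div_iff hden.ne' hc₁.ne', ← sq_abs (b s)]
          ring
        calc (b s) ^ 2 / (σ s) ^ 2 * E s ≤ (b s) ^ 2 / (c₁ * |b s| * E s) * E s :=
              mul_le_mul_of_nonneg_right h1 (hEpos s).le
          _ = |b s| / c₁ := h2
    calc F s = (b s) ^ 2 / (σ s) ^ 2 * E s * H s := by rw [hF_def]; ring
      _ ≤ |b s| / c₁ * H s := mul_le_mul_of_nonneg_right hmain hHnonneg
      _ ≤ |b s| / c₁ * (A + c₂ * B s) := by
          apply mul_le_mul_of_nonneg_left _ (by positivity)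
          rw [hHs]
          exact add_le_add_right htail A
      _ = A / c₁ * |b s| + c₂ / c₁ * (|b s| * B s) := by ring
  -- derivative facts on (t₁, t): B' = |b|
  have hBderiv : ∀ x ∈ Ioo t₁ t, HasDerivAt B |b x| x := by
    intro x hx
    have hopen : IsOpen (Ioo (0:ℝ) t) := isOpen_Ioo
    have hxmem : x ∈ Ioo (0:ℝ) t := ⟨lt_trans ht₁ hx.1, hx.2⟩
    have hbcIoo : ContinuousOn (fun y => |b y|) (Ioo (0:ℝ) t) :=
      (hbc.mono Ioo_subset_Icc_self).abs
    have hca : ContinuousAt (fun y => |b y|) x :=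
      hbcIoo.continuousAt (hopen.mem_nhds hxmem)
    exact intervalIntegral.integral_hasDerivAt_right
      (habsint t₁ ⟨h0t₁, ht₁t⟩ x ⟨le_trans h0t₁ hx.1.le, hx.2.le⟩)
      (hbcIoo.stronglyMeasurableAtFilter hopen x hxmem) hca
  -- ∫_{t₁}^t |b s| * B s = B t ^ 2 / 2
  have hsq : (∫ s in t₁..t, |b s| * B s) = B t ^ 2 / 2 := by
    have hg : ∀ x ∈ Ioo t₁ t, HasDerivWithinAt (fun y => B y ^ 2 / 2) (|b x| * B x) (Ioi x) x := by
      intro x hx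
      have := (((hBderiv x hx).mul (hBderiv x hx)).div_const 2)
      have h2 : HasDerivAt (fun y => B y * B y / 2) (|b x| * B x) x := by
        exact this.congr_deriv (by ring)
      have h3 : (fun y => B y ^ 2 / 2) = fun y => B y * B y / 2 := by
        funext y; rw [sq]
      rw [h3]
      exact h2.hasDerivWithinAt
    have hcont : ContinuousOn (fun y => B y ^ 2 / 2) (Icc t₁ t) :=
      ((hBc.pow 2).div_const 2)
    have hint : IntervalIntegrable (fun s => |b s| * B s) volume t₁ t := by
      apply ContinuousOn.intervalIntegrable
      rw [uIcc_of_le ht₁t]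
      exact ((hbc.mono (Icc_subset_Icc h0t₁ le_rfl)).abs).mul hBc
    have := intervalIntegral.integral_eq_sub_of_hasDeriv_right_of_le ht₁t hcont hg hint
    rw [this]
    have hBt₁ : B t₁ = 0 := intervalIntegral.integral_same
    rw [hBt₁]
    ring
  -- integrate the pointwise bound
  have hintF : IntervalIntegrable F volume t₁ t := hFint t₁ ⟨h0t₁, ht₁t⟩ t (right_mem_Icc.2 h0t)
  have hintRHS : IntervalIntegrable (fun s => A / c₁ * |b s| + c₂ / c₁ * (|b s| * B s)) volume t₁ t := by
    apply IntervalIntegrable.add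
    · exact ((habsint t₁ ⟨h0t₁, ht₁t⟩ t (right_mem_Icc.2 h0t)).const_mul _)
    · apply IntervalIntegrable.const_mul
      apply ContinuousOn.intervalIntegrable
      rw [uIcc_of_le ht₁t]
      exact ((hbc.mono (Icc_subset_Icc h0t₁ le_rfl)).abs).mul hBc
  have hmono : (∫ s in t₁..t, F s) ≤
      ∫ s in t₁..t, (A / c₁ * |b s| + c₂ / c₁ * (|b s| * B s)) :=
    intervalIntegral.integral_mono_on ht₁t hintF hintRHS hkey
  have hRHSval : (∫ s in t₁..t, (A / c₁ * |b s| + c₂ / c₁ * (|b s| * B s)))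
      = A / c₁ * B t + c₂ / c₁ * (B t ^ 2 / 2) := by
    rw [intervalIntegral.integral_add
      ((habsint t₁ ⟨h0t₁, ht₁t⟩ t (right_mem_Icc.2 h0t)).const_mul _)
      (by
        apply IntervalIntegrable.const_mul
        apply ContinuousOn.intervalIntegrable
        rw [uIcc_of_le ht₁t]
        exact ((hbc.mono (Icc_subset_Icc h0t₁ le_rfl)).abs).mul hBc),
      intervalIntegral.integral_const_mul, intervalIntegral.integral_const_mul, hsq]
  rw [hdiff]
  calc (∫ s in t₁..t, F s) ≤ A / c₁ * B t + c₂ / c₁ * (B t ^ 2 / 2) := by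
        rw [← hRHSval]; exact hmono
    _ = (1 / c₁ * A) * B t + c₂ / (2 * c₁) * B t ^ 2 := by ring
end

section
/- Let T ∈ (0,∞], let b : [0,T) → ℝ and σ : [0,T) → (0,∞) be continuous, let α ∈ ℝ, and suppose there exist constants c₁ > 0, c₂ > 0 and t₁ ∈ (0,T) such that c₁·|b(t)|·exp{2α∫₀ᵗ b(w) dw} ≤ σ(t)² ≤ c₂·|b(t)|·exp{2α∫₀ᵗ b(w) dw} for all t ∈ [t₁,T). Then for all t ∈ [t₁,T), I_α(t) − I_α(t₁) ≥ (c₁/(2c₂))·(∫_{t₁}^t |b(u)| du)². -/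
open MeasureTheory Filter Set Topology intervalIntegral

/-- Lower bound on the increment of the Fisher information under the two-sided bound
`c₁·|b(t)|·exp{2α∫₀ᵗ b} ≤ σ(t)² ≤ c₂·|b(t)|·exp{2α∫₀ᵗ b}` on `[t₁, T)`. -/
theorem fisher_increment_lower_bound (T : EReal) (hT : 0 < T)
    (b σ : ℝ → ℝ) (α : ℝ) (c₁ c₂ t₁ : ℝ)
    (hc₁ : 0 < c₁) (hc₂ : 0 < c₂) (ht₁ : 0 < t₁) (ht₁T : (t₁ : EReal) < T)
    (hb : ContinuousOn b {t : ℝ | 0 ≤ t ∧ (t : EReal) < T})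
    (hσ : ContinuousOn σ {t : ℝ | 0 ≤ t ∧ (t : EReal) < T})
    (hσpos : ∀ t : ℝ, 0 ≤ t → (t : EReal) < T → 0 < σ t)
    (hbound : ∀ t : ℝ, t₁ ≤ t → (t : EReal) < T →
      c₁ * |b t| * Real.exp (2 * α * ∫ w in (0:ℝ)..t, b w) ≤ (σ t) ^ 2 ∧
      (σ t) ^ 2 ≤ c₂ * |b t| * Real.exp (2 * α * ∫ w in (0:ℝ)..t, b w)) :
    ∀ t : ℝ, t₁ ≤ t → (t : EReal) < T →
      (c₁ / (2 * c₂)) * (∫ u in t₁..t, |b u|) ^ 2 ≤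
        fisherInfo b σ α t - fisherInfo b σ α t₁ := by
  intro t ht₁t htT
  have ht0 : (0:ℝ) ≤ t := le_trans ht₁.le ht₁t
  have hmemS : ∀ x : ℝ, 0 ≤ x → x ≤ t → x ∈ {s : ℝ | 0 ≤ s ∧ (s : EReal) < T} := by
    intro x hx0 hxt
    exact ⟨hx0, lt_of_le_of_lt (EReal.coe_le_coe_iff.mpr hxt) htT⟩
  have hsub : Icc (0:ℝ) t ⊆ {s : ℝ | 0 ≤ s ∧ (s : EReal) < T} := fun x hx => hmemS x hx.1 hx.2
  -- the open set on which `b`, `σ` are continuous at each point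
  have hUopen : IsOpen {s : ℝ | 0 < s ∧ (s : EReal) < T} := by
    have : {s : ℝ | 0 < s ∧ (s : EReal) < T} =
        Ioi (0:ℝ) ∩ (fun x : ℝ => (x : EReal)) ⁻¹' Iio T := rfl
    rw [this]
    exact isOpen_Ioi.inter (isOpen_Iio.preimage continuous_coe_real_ereal)
  have hUsub : {s : ℝ | 0 < s ∧ (s : EReal) < T} ⊆ {s : ℝ | 0 ≤ s ∧ (s : EReal) < T} :=
    fun x hx => ⟨hx.1.le, hx.2⟩
  have hbc : ContinuousOn b (Icc 0 t) := hb.mono hsub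
  have hσc : ContinuousOn σ (Icc 0 t) := hσ.mono hsub
  have hσposI : ∀ x ∈ Icc (0:ℝ) t, 0 < σ x := fun x hx => hσpos x hx.1 (hmemS x hx.1 hx.2).2
  have hbint : ∀ x y : ℝ, x ∈ Icc (0:ℝ) t → y ∈ Icc (0:ℝ) t → IntervalIntegrable b volume x y := by
    intro x y hx hy
    exact (hbc.mono (uIcc_subset_Icc hx hy)).intervalIntegrable
  set E : ℝ → ℝ := fun w => Real.exp (2 * α * ∫ v in (0:ℝ)..w, b v) with hEdef
  set G : ℝ → ℝ := fun u => σ u ^ 2 / E u with hGdef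
  set K : ℝ → ℝ := fun s => ∫ u in (0:ℝ)..s, G u with hKdef
  set B : ℝ → ℝ := fun s => ∫ u in t₁..s, |b u| with hBdef
  have hEpos : ∀ w, 0 < E w := fun w => Real.exp_pos _
  have hGnn : ∀ u, 0 ≤ G u := fun u => div_nonneg (sq_nonneg _) (hEpos u).le
  -- continuity of the primitive of b
  have hPc : ContinuousOn (fun w => ∫ v in (0:ℝ)..w, b v) (Icc 0 t) := by
    have := intervalIntegral.continuousOn_primitive_interval
      (f := b) (μ := volume) (a := (0:ℝ)) (b := t) (by rw [uIcc_of_le ht0]; exact hbc.integrableOn_Icc)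
    rwa [uIcc_of_le ht0] at this
  have hEc : ContinuousOn E (Icc 0 t) :=
    Real.continuous_exp.comp_continuousOn (continuousOn_const.mul hPc)
  have hGc : ContinuousOn G (Icc 0 t) :=
    (hσc.pow 2).div hEc (fun x _ => (hEpos x).ne')
  have hKc : ContinuousOn K (Icc 0 t) := by
    have := intervalIntegral.continuousOn_primitive_interval
      (f := G) (μ := volume) (a := (0:ℝ)) (b := t) (by rw [uIcc_of_le ht0]; exact hGc.integrableOn_Icc)
    rwa [uIcc_of_le ht0] at this
  -- rewriting the inner integral
  have hJ : ∀ s ∈ Icc (0:ℝ) t,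
      (∫ u in (0:ℝ)..s, σ u ^ 2 * Real.exp (2 * α * ∫ v in u..s, b v)) = E s * K s := by
    intro s hs
    have heq : EqOn (fun u => σ u ^ 2 * Real.exp (2 * α * ∫ v in u..s, b v))
        (fun u => G u * E s) (uIcc 0 s) := by
      intro u hu
      rw [uIcc_of_le hs.1] at hu
      have hu' : u ∈ Icc (0:ℝ) t := ⟨hu.1, hu.2.trans hs.2⟩
      have h1 : (∫ v in u..s, b v) = (∫ v in (0:ℝ)..s, b v) - ∫ v in (0:ℝ)..u, b v :=
        (integral_interval_sub_left (hbint 0 s ⟨le_rfl, ht0⟩ hs) (hbint 0 u ⟨le_rfl, ht0⟩ hu')).symm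
      simp only [h1, hGdef, hEdef]
      rw [mul_sub, Real.exp_sub]
      field_simp
    rw [intervalIntegral.integral_congr heq, intervalIntegral.integral_mul_const, mul_comm]
  set F : ℝ → ℝ := fun s => b s ^ 2 / σ s ^ 2 *
      ∫ u in (0:ℝ)..s, σ u ^ 2 * Real.exp (2 * α * ∫ v in u..s, b v) with hFdef
  have hFc : ContinuousOn F (Icc 0 t) := by
    have hg : ContinuousOn (fun s => b s ^ 2 / σ s ^ 2 * (E s * K s)) (Icc 0 t) :=
      ((hbc.pow 2).div (hσc.pow 2) (fun x hx => (pow_pos (hσposI x hx) 2).ne')).mul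
        (hEc.mul hKc)
    exact hg.congr (fun s hs => by simp only [hFdef]; rw [hJ s hs])
  -- splitting the Fisher information
  have hFint : ∀ x y : ℝ, x ∈ Icc (0:ℝ) t → y ∈ Icc (0:ℝ) t → IntervalIntegrable F volume x y :=
    fun x y hx hy => (hFc.mono (uIcc_subset_Icc hx hy)).intervalIntegrable
  have hsplit : fisherInfo b σ α t - fisherInfo b σ α t₁ = ∫ s in t₁..t, F s := by
    unfold fisherInfo
    exact integral_interval_sub_left (hFint 0 t ⟨le_rfl, ht0⟩ ⟨ht0, le_rfl⟩)
      (hFint 0 t₁ ⟨le_rfl, ht0⟩ ⟨ht₁.le, ht₁t⟩)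
  have ht₁I : t₁ ∈ Icc (0:ℝ) t := ⟨ht₁.le, ht₁t⟩
  have hIccsub : Icc t₁ t ⊆ Icc (0:ℝ) t := Icc_subset_Icc ht₁.le le_rfl
  have hBc : ContinuousOn B (Icc 0 t) := by
    have := intervalIntegral.continuousOn_primitive_interval'
      (f := fun u => |b u|) (μ := volume) (b₁ := (0:ℝ)) (b₂ := t) (a := t₁)
      ((hbc.abs.mono (uIcc_subset_Icc ⟨le_rfl, ht0⟩ ⟨ht0, le_rfl⟩)).intervalIntegrable)
      (by rw [uIcc_of_le ht0]; exact ht₁I)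
    rwa [uIcc_of_le ht0] at this
  have hBnn : ∀ s ∈ Icc t₁ t, 0 ≤ B s := fun s hs =>
    intervalIntegral.integral_nonneg hs.1 (fun u _ => abs_nonneg _)
  -- pointwise lower bound on F
  have hpt : ∀ s ∈ Icc t₁ t, c₁ / c₂ * (|b s| * B s) ≤ F s := by
    intro s hs
    have hsI : s ∈ Icc (0:ℝ) t := hIccsub hs
    have hsT : (s : EReal) < T := (hmemS s hsI.1 hsI.2).2
    obtain ⟨hlow, hupp⟩ := hbound s hs.1 hsT
    have hEs : 0 < E s := hEpos s
    have hσs : 0 < σ s ^ 2 := pow_pos (hσposI s hsI) 2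
    have hupp' : σ s ^ 2 ≤ c₂ * |b s| * E s := hupp
    have hbs : 0 < |b s| := by
      nlinarith [mul_pos hc₂ hEs, lt_of_lt_of_le hσs hupp']
    -- lower bound on K s
    have hGlb : ∀ u ∈ Icc t₁ s, c₁ * |b u| ≤ G u := by
      intro u hu
      have huI : u ∈ Icc (0:ℝ) t := hIccsub ⟨hu.1, hu.2.trans hs.2⟩
      have hl := (hbound u hu.1 (hmemS u huI.1 huI.2).2).1
      have hl' : c₁ * |b u| * E u ≤ σ u ^ 2 := hl
      rw [hGdef]
      rw [le_div_iff₀ (hEpos u)]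
      exact hl'
    have hGint1 : IntervalIntegrable G volume 0 t₁ :=
      (hGc.mono (uIcc_subset_Icc ⟨le_rfl, ht0⟩ ht₁I)).intervalIntegrable
    have hGint2 : IntervalIntegrable G volume t₁ s :=
      (hGc.mono (uIcc_subset_Icc ht₁I hsI)).intervalIntegrable
    have hK1 : c₁ * B s ≤ K s := by
      have hKs : K t₁ + (∫ u in t₁..s, G u) = K s :=
        integral_add_adjacent_intervals hGint1 hGint2
      have h0 : 0 ≤ K t₁ := intervalIntegral.integral_nonneg ht₁.le (fun u _ => hGnn u)
      have h2 : (∫ u in t₁..s, c₁ * |b u|) ≤ ∫ u in t₁..s, G u :=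
        intervalIntegral.integral_mono_on hs.1
          (((hbc.abs.mono (uIcc_subset_Icc ht₁I hsI)).intervalIntegrable).const_mul c₁) hGint2 hGlb
      have h3 : (∫ u in t₁..s, c₁ * |b u|) = c₁ * B s := by
        rw [hBdef]
        exact intervalIntegral.integral_const_mul _ _
      linarith
    have hfrac : |b s| / (c₂ * E s) ≤ b s ^ 2 / σ s ^ 2 := by
      rw [div_le_div_iff₀ (by positivity) hσs]
      nlinarith [mul_le_mul_of_nonneg_left hupp' (abs_nonneg (b s)), sq_abs (b s)]
    have hBs := hBnn s hs
    have hprod : |b s| / (c₂ * E s) * (E s * (c₁ * B s)) ≤ b s ^ 2 / σ s ^ 2 * (E s * K s) := by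
      apply mul_le_mul hfrac (mul_le_mul_of_nonneg_left hK1 hEs.le) (by positivity)
      exact le_trans (by positivity) hfrac
    have heqF : F s = b s ^ 2 / σ s ^ 2 * (E s * K s) := by
      simp only [hFdef]; rw [hJ s hsI]
    have hcalc : |b s| / (c₂ * E s) * (E s * (c₁ * B s)) = c₁ / c₂ * (|b s| * B s) := by
      field_simp
    rw [heqF]
    calc c₁ / c₂ * (|b s| * B s) = |b s| / (c₂ * E s) * (E s * (c₁ * B s)) := hcalc.symm
      _ ≤ _ := hprod
  -- integrate the pointwise bound
  have hlhs_int : IntervalIntegrable (fun s => c₁ / c₂ * (|b s| * B s)) volume t₁ t := by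
    apply ContinuousOn.intervalIntegrable
    apply ContinuousOn.mul continuousOn_const
    exact ((hbc.abs.mono (uIcc_subset_Icc ht₁I ⟨ht0, le_rfl⟩)).mul
      (hBc.mono (uIcc_subset_Icc ht₁I ⟨ht0, le_rfl⟩)))
  have hmono : (∫ s in t₁..t, c₁ / c₂ * (|b s| * B s)) ≤ ∫ s in t₁..t, F s :=
    intervalIntegral.integral_mono_on ht₁t hlhs_int
      (hFint t₁ t ht₁I ⟨ht0, le_rfl⟩) hpt
  -- compute the left integral via FTC
  have hFTC : (∫ s in t₁..t, |b s| * B s) = B t ^ 2 / 2 := by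
    have key : ∀ s ∈ uIcc t₁ t, HasDerivAt (fun x => B x ^ 2 / 2) (|b s| * B s) s := by
      intro s hsu
      rw [uIcc_of_le ht₁t] at hsu
      have hsU : s ∈ {x : ℝ | 0 < x ∧ (x : EReal) < T} :=
        ⟨lt_of_lt_of_le ht₁ hsu.1, (hmemS s (le_trans ht₁.le hsu.1) hsu.2).2⟩
      have hbat : ContinuousAt (fun x => |b x|) s :=
        ((hb.mono hUsub).continuousAt (hUopen.mem_nhds hsU)).abs
      have hmeas : StronglyMeasurableAtFilter (fun x => |b x|) (𝓝 s) volume :=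
        ContinuousOn.stronglyMeasurableAtFilter hUopen ((hb.mono hUsub).abs) s hsU
      have hint : IntervalIntegrable (fun x => |b x|) volume t₁ s :=
        (hbc.abs.mono (uIcc_subset_Icc ht₁I (hIccsub hsu))).intervalIntegrable
      have hB' : HasDerivAt B (|b s|) s :=
        intervalIntegral.integral_hasDerivAt_right hint hmeas hbat
      have : HasDerivAt (fun x => B x ^ 2 / 2) (↑2 * B s ^ (2 - 1) * |b s| / 2) s :=
        (hB'.pow 2).div_const 2
      convert this using 1
      norm_num
      ring
    rw [intervalIntegral.integral_eq_sub_of_hasDerivAt key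
      ((hbc.abs.mono (uIcc_subset_Icc ht₁I ⟨ht0, le_rfl⟩)).intervalIntegrable.mul_continuousOn
        (hBc.mono (uIcc_subset_Icc ht₁I ⟨ht0, le_rfl⟩)))]
    have hBt₁ : B t₁ = 0 := by rw [hBdef]; exact intervalIntegral.integral_same
    rw [hBt₁]
    ring
  have hconst : (∫ s in t₁..t, c₁ / c₂ * (|b s| * B s)) = c₁ / c₂ * (B t ^ 2 / 2) := by
    rw [intervalIntegral.integral_const_mul, hFTC]
  have hBt : B t = ∫ u in t₁..t, |b u| := rfl
  rw [hsplit, ← hBt]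
  calc c₁ / (2 * c₂) * B t ^ 2 = c₁ / c₂ * (B t ^ 2 / 2) := by ring
    _ = ∫ s in t₁..t, c₁ / c₂ * (|b s| * B s) := hconst.symm
    _ ≤ ∫ s in t₁..t, F s := hmono
end

section
/- Let T ∈ (0,∞], let b : [0,T) → ℝ and σ : [0,T) → (0,∞) be continuous, let α ∈ ℝ, and suppose that lim_{t↑T} I_α(t) = ∞ and lim_{t↑T} (b(t)/σ(t)²)·exp{2α∫₀ᵗ b(w) dw} = C for some C ∈ ℝ with C ≠ 0. Then lim_{t↑T} (∫₀ᵗ σ(s)²·exp{−2α∫₀ˢ b(w) dw} ds)² / I_α(t) = 2/C², and consequently lim_{t↑T} (∫₀ᵗ σ(s)²·exp{−2α∫₀ˢ b(w) dw} ds) / √(I_α(t)) = √2/|C|. -/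
open MeasureTheory Filter Set Topology intervalIntegral

lemma upFilter_basis (T : EReal) (hT : (⊥:EReal) < T) :
    (upFilter T).HasBasis (fun l : EReal => l < T)
      (fun l => {x : ℝ | l < (x : EReal) ∧ (x : EReal) < T}) :=
  (nhdsLT_basis_of_exists_lt ⟨⊥, hT⟩).comap (fun x : ℝ => (x : EReal))

lemma exists_real_btwn {l T : EReal} (h : l < T) :
    ∃ a : ℝ, l < (a : EReal) ∧ (a : EReal) < T := by
  obtain ⟨x, hx1, hx2⟩ := exists_between h
  lift x to ℝ using ⟨(hx2.trans_le le_top).ne, ((bot_le.trans_lt hx1)).ne'⟩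
  exact ⟨x, hx1, hx2⟩

lemma eventually_upFilter {T : EReal} (hT : (⊥:EReal) < T) {a : ℝ} (ha : (a : EReal) < T) :
    ∀ᶠ x in upFilter T, a < x ∧ (x : EReal) < T := by
  filter_upwards [(upFilter_basis T hT).mem_of_mem (i := (a : EReal)) ha] with x hx
  exact ⟨by exact_mod_cast hx.1, hx.2⟩

lemma upFilter_tail {T : EReal} (hT : (⊥:EReal) < T) {P : ℝ → Prop}
    (h : ∀ᶠ x in upFilter T, P x) :
    ∃ a : ℝ, (a : EReal) < T ∧ ∀ x : ℝ, a < x → (x : EReal) < T → P x := by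
  obtain ⟨l, hl, hsub⟩ := (upFilter_basis T hT).eventually_iff.1 h
  obtain ⟨a, ha1, ha2⟩ := exists_real_btwn hl
  refine ⟨a, ha2, fun x hx hxT => hsub ⟨ha1.trans ?_, hxT⟩⟩
  exact_mod_cast hx

set_option maxHeartbeats 1000000 in
/-- Under `I_α(t) → ∞` and condition (2.6), the ratio
`(∫₀ᵗ σ² exp{−2α∫₀ b})² / I_α(t)` tends to `2/C²`, and consequently
`(∫₀ᵗ σ² exp{−2α∫₀ b}) / √(I_α(t))` tends to `√2 / |C|`. -/
theorem tau_inv_limit (T : EReal) (hT : 0 < T)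
    (b σ : ℝ → ℝ) (α : ℝ) (C : ℝ) (hC : C ≠ 0)
    (hb : ContinuousOn b {t : ℝ | 0 ≤ t ∧ (t : EReal) < T})
    (hσ : ContinuousOn σ {t : ℝ | 0 ≤ t ∧ (t : EReal) < T})
    (hσpos : ∀ t : ℝ, 0 ≤ t → (t : EReal) < T → 0 < σ t)
    (hI : Tendsto (fisherInfo b σ α) (upFilter T) atTop)
    (hlim : Tendsto
      (fun t : ℝ => b t / (σ t) ^ 2 * Real.exp (2 * α * ∫ w in (0:ℝ)..t, b w))
      (upFilter T) (𝓝 C)) :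
    Tendsto
      (fun t : ℝ =>
        (∫ s in (0:ℝ)..t,
            (σ s) ^ 2 * Real.exp (-(2 * α) * ∫ w in (0:ℝ)..s, b w)) ^ 2 /
          fisherInfo b σ α t)
      (upFilter T) (𝓝 (2 / C ^ 2)) ∧
    Tendsto
      (fun t : ℝ =>
        (∫ s in (0:ℝ)..t,
            (σ s) ^ 2 * Real.exp (-(2 * α) * ∫ w in (0:ℝ)..s, b w)) /
          Real.sqrt (fisherInfo b σ α t))
      (upFilter T) (𝓝 (Real.sqrt 2 / |C|)) := by

  have hbotT : (⊥:EReal) < T := lt_of_le_of_lt bot_le hT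

  set D : Set ℝ := {t : ℝ | 0 ≤ t ∧ (t : EReal) < T} with hDdef
  set U : Set ℝ := {t : ℝ | 0 < t ∧ (t : EReal) < T} with hUdef
  have hUopen : IsOpen U := by
    have : U = Ioi (0:ℝ) ∩ (fun x : ℝ => (x : EReal)) ⁻¹' Iio T := rfl
    rw [this]
    exact isOpen_Ioi.inter (isOpen_Iio.preimage continuous_coe_real_ereal)
  have hUD : U ⊆ D := fun t ht => ⟨ht.1.le, ht.2⟩
  have hIccD : ∀ t ∈ D, Icc (0:ℝ) t ⊆ D := by
    intro t ht s hs
    exact ⟨hs.1, lt_of_le_of_lt (by exact_mod_cast hs.2) ht.2⟩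
  have hIccU : ∀ t₀ ∈ U, ∀ t ∈ D, Icc t₀ t ⊆ U := by
    intro t₀ ht₀ t ht s hs
    exact ⟨lt_of_lt_of_le ht₀.1 hs.1, lt_of_le_of_lt (by exact_mod_cast hs.2) ht.2⟩
  set B : ℝ → ℝ := fun s => ∫ v in (0:ℝ)..s, b v with hBdef
  set f : ℝ → ℝ := fun s => (σ s) ^ 2 * Real.exp (-(2 * α) * B s) with hfdef
  set F : ℝ → ℝ := fun t => ∫ s in (0:ℝ)..t, f s with hFdef
  set E : ℝ → ℝ := fun s => Real.exp (2 * α * B s) with hEdef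
  -- integrability of b
  have hbInt : ∀ t ∈ D, IntervalIntegrable b volume 0 t := by
    intro t ht
    apply ContinuousOn.intervalIntegrable
    rw [uIcc_of_le ht.1]
    exact hb.mono (hIccD t ht)
  have hBcont : ∀ t ∈ D, ContinuousOn B (Icc 0 t) := by
    intro t ht
    have h1 : IntegrableOn b (uIcc 0 t) volume := by
      rw [uIcc_of_le ht.1]
      exact (hb.mono (hIccD t ht)).integrableOn_Icc
    have := intervalIntegral.continuousOn_primitive_interval h1
    rwa [uIcc_of_le ht.1] at this
  have hfcontD : ∀ t ∈ D, ContinuousOn f (Icc 0 t) := by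
    intro t ht
    exact ((hσ.mono (hIccD t ht)).pow 2).mul
      (Real.continuous_exp.comp_continuousOn (continuousOn_const.mul (hBcont t ht)))
  have hfInt : ∀ t ∈ D, IntervalIntegrable f volume 0 t := by
    intro t ht
    apply ContinuousOn.intervalIntegrable
    rw [uIcc_of_le ht.1]
    exact hfcontD t ht
  have hf_nonneg : ∀ s, 0 ≤ f s := fun s =>
    mul_nonneg (sq_nonneg _) (Real.exp_pos _).le
  have hFnonneg : ∀ t, 0 ≤ t → 0 ≤ F t := fun t ht =>
    intervalIntegral.integral_nonneg ht fun u _ => hf_nonneg u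
  have hFcontD : ∀ t ∈ D, ContinuousOn F (Icc 0 t) := by
    intro t ht
    have h1 : IntegrableOn f (uIcc 0 t) volume := by
      rw [uIcc_of_le ht.1]
      exact (hfcontD t ht).integrableOn_Icc
    have := intervalIntegral.continuousOn_primitive_interval h1
    rwa [uIcc_of_le ht.1] at this
  -- derivatives on U
  have hBderiv : ∀ s ∈ U, HasDerivAt B (b s) s := by
    intro s hs
    exact intervalIntegral.integral_hasDerivAt_right (hbInt s (hUD hs))
      (ContinuousOn.stronglyMeasurableAtFilter hUopen (hb.mono hUD) s hs)
      ((hb.mono hUD).continuousAt (hUopen.mem_nhds hs))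
  have hfca : ∀ s ∈ U, ContinuousAt f s := by
    intro s hs
    exact (((hσ.mono hUD).continuousAt (hUopen.mem_nhds hs)).pow 2).mul
      (Real.continuous_exp.continuousAt.comp
        (continuousAt_const.mul (hBderiv s hs).continuousAt))
  have hFderiv : ∀ s ∈ U, HasDerivAt F (f s) s := by
    intro s hs
    exact intervalIntegral.integral_hasDerivAt_right (hfInt s (hUD hs))
      (ContinuousOn.stronglyMeasurableAtFilter hUopen
        (fun u hu => (hfca u hu).continuousWithinAt) s hs)
      (hfca s hs)
  have hGderiv : ∀ s ∈ U, HasDerivAt (fun t => F t ^ 2) (2 * F s * f s) s := by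
    intro s hs
    have := (hFderiv s hs).fun_pow 2
    simpa using this
  set g : ℝ → ℝ := fun t => b t / (σ t) ^ 2 * Real.exp (2 * α * ∫ w in (0:ℝ)..t, b w) with hgdef
  set h : ℝ → ℝ := fun s => (b s) ^ 2 / (σ s) ^ 2 * (E s * F s) with hhdef
  have hgE : ∀ s, g s = b s / (σ s) ^ 2 * E s := fun s => rfl
  -- rewrite inner integral
  have hinner : ∀ t ∈ D, ∀ s ∈ Icc (0:ℝ) t,
      (∫ u in (0:ℝ)..s, (σ u) ^ 2 * Real.exp (2 * α * ∫ v in u..s, b v)) = E s * F s := by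
    intro t ht s hs
    have hsD : s ∈ D := hIccD t ht hs
    have hcongr : ∀ u ∈ Icc (0:ℝ) s,
        (σ u) ^ 2 * Real.exp (2 * α * ∫ v in u..s, b v) = E s * f u := by
      intro u hu
      have huD : u ∈ D := hIccD s hsD hu
      have hsub : (∫ v in u..s, b v) = B s - B u :=
        (intervalIntegral.integral_interval_sub_left (hbInt s hsD) (hbInt u huD)).symm
      rw [hsub, hfdef, hEdef]
      rw [show 2 * α * (B s - B u) = 2 * α * B s + -(2 * α) * B u by ring, Real.exp_add]
      ring
    have := intervalIntegral.integral_congr (a := (0:ℝ)) (b := s) (μ := volume)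
      (g := fun u => E s * f u) (by rwa [uIcc_of_le hs.1])
    rw [this, intervalIntegral.integral_const_mul]
  have hfisher : ∀ t ∈ D, fisherInfo b σ α t = ∫ s in (0:ℝ)..t, h s := by
    intro t ht
    apply intervalIntegral.integral_congr
    rw [uIcc_of_le ht.1]
    intro s hs
    simp only [hhdef]
    rw [hinner t ht s hs]
  have hhcontD : ∀ t ∈ D, ContinuousOn h (Icc 0 t) := by
    intro t ht
    have h1 : ContinuousOn (fun s => (b s) ^ 2 / (σ s) ^ 2) (Icc 0 t) :=
      ((hb.mono (hIccD t ht)).pow 2).div ((hσ.mono (hIccD t ht)).pow 2)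
        (fun s hs => pow_ne_zero 2 (hσpos s ((hIccD t ht) hs).1 ((hIccD t ht) hs).2).ne')
    have h2 : ContinuousOn E (Icc 0 t) :=
      Real.continuous_exp.comp_continuousOn (continuousOn_const.mul (hBcont t ht))
    exact h1.mul (h2.mul (hFcontD t ht))
  have hhInt : ∀ t ∈ D, IntervalIntegrable h volume 0 t := by
    intro t ht
    apply ContinuousOn.intervalIntegrable
    rw [uIcc_of_le ht.1]
    exact hhcontD t ht
  have hh_nonneg : ∀ s, 0 ≤ s → 0 ≤ h s := by
    intro s hs
    exact mul_nonneg (div_nonneg (sq_nonneg _) (sq_nonneg _))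
      (mul_nonneg (Real.exp_pos _).le (hFnonneg s hs))
  have hInonneg : ∀ t ∈ D, 0 ≤ fisherInfo b σ α t := by
    intro t ht
    rw [hfisher t ht]
    exact intervalIntegral.integral_nonneg ht.1 fun u hu => hh_nonneg u hu.1
  -- key algebraic identity
  have hkey : ∀ s ∈ D, h s = g s ^ 2 * (F s * f s) := by
    intro s hs
    have hσne : σ s ≠ 0 := (hσpos s hs.1 hs.2).ne'
    have hEe : E s * Real.exp (-(2 * α * B s)) = 1 := by
      rw [hEdef]
      rw [← Real.exp_add, show 2 * α * B s + -(2 * α * B s) = 0 by ring, Real.exp_zero]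
    simp only [hhdef, hgE, hfdef]
    field_simp
    linear_combination (-(b s ^ 2 * E s * F s)) * hEe
  -- FTC
  have hFTC_G : ∀ t₀ ∈ U, ∀ t ∈ U, t₀ ≤ t →
      F t ^ 2 - F t₀ ^ 2 = 2 * ∫ s in t₀..t, F s * f s := by
    intro t₀ ht₀ t ht hle
    have hsubU : Icc t₀ t ⊆ U := hIccU t₀ ht₀ t (hUD ht)
    have hsub0 : Icc t₀ t ⊆ Icc 0 t := Icc_subset_Icc ht₀.1.le le_rfl
    have hint : IntervalIntegrable (fun s => 2 * F s * f s) volume t₀ t := by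
      apply ContinuousOn.intervalIntegrable
      rw [uIcc_of_le hle]
      exact ((continuousOn_const.mul ((hFcontD t (hUD ht)).mono hsub0)).mul
        ((hfcontD t (hUD ht)).mono hsub0))
    have heq := intervalIntegral.integral_eq_sub_of_hasDerivAt
      (f := fun u => F u ^ 2) (f' := fun s => 2 * F s * f s)
      (fun x hx => hGderiv x (hsubU (by rwa [uIcc_of_le hle] at hx))) hint
    rw [← heq]
    simp_rw [mul_assoc]
    rw [intervalIntegral.integral_const_mul]
  have hFTC_I : ∀ t₀ ∈ U, ∀ t ∈ U, t₀ ≤ t →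
      fisherInfo b σ α t - fisherInfo b σ α t₀ = ∫ s in t₀..t, h s := by
    intro t₀ ht₀ t ht hle
    rw [hfisher t (hUD ht), hfisher t₀ (hUD ht₀)]
    exact intervalIntegral.integral_interval_sub_left (hhInt t (hUD ht)) (hhInt t₀ (hUD ht₀))
  -- main limit
  have main : Tendsto (fun t => F t ^ 2 / fisherInfo b σ α t) (upFilter T) (𝓝 (2 / C ^ 2)) := by
    rw [Metric.tendsto_nhds]
    intro ε hε
    have hC2 : (0:ℝ) < C ^ 2 := by positivity
    have hqcont : ContinuousAt (fun d : ℝ => 2 / (C ^ 2 + d)) 0 := by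
      apply ContinuousAt.div continuousAt_const (continuousAt_const.add continuousAt_id)
      simpa using hC2.ne'
    obtain ⟨δ₀, hδ₀pos, hδ₀⟩ := Metric.continuousAt_iff.1 hqcont (ε/2) (by linarith)
    set δ := min (δ₀/2) (C^2/2) with hδdef
    have hδpos : 0 < δ := lt_min (by linarith) (by linarith)
    have hδlt : δ < δ₀ := lt_of_le_of_lt (min_le_left _ _) (by linarith)
    have hδC : δ < C^2 := lt_of_le_of_lt (min_le_right _ _) (by linarith)
    have hCm : (0:ℝ) < C^2 - δ := by linarith
    have hCp : (0:ℝ) < C^2 + δ := by linarith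
    have hq1 : 2 / C ^ 2 - ε/2 < 2 / (C ^ 2 + δ) := by
      have h1 := hδ₀ (x := δ) (by rw [Real.dist_eq, sub_zero, abs_of_pos hδpos]; exact hδlt)
      rw [Real.dist_eq, add_zero] at h1
      have := abs_lt.1 h1
      linarith [this.1]
    have hq2 : 2 / (C ^ 2 - δ) < 2 / C ^ 2 + ε/2 := by
      have h1 := hδ₀ (x := -δ) (by rw [Real.dist_eq, sub_zero, abs_neg, abs_of_pos hδpos]; exact hδlt)
      rw [Real.dist_eq, add_zero] at h1
      rw [show C^2 + -δ = C^2 - δ by ring] at h1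
      have := abs_lt.1 h1
      linarith [this.2]
    -- band for g²
    have hg2 : Tendsto (fun t => g t ^ 2) (upFilter T) (𝓝 (C ^ 2)) := hlim.pow 2
    have hband : ∀ᶠ t in upFilter T, |g t ^ 2 - C ^ 2| ≤ δ := by
      filter_upwards [Metric.tendsto_nhds.1 hg2 δ hδpos] with t ht
      rw [Real.dist_eq] at ht; exact ht.le
    obtain ⟨a, haT, ha⟩ := upFilter_tail hbotT hband
    have hmaxT : ((max a 0 : ℝ) : EReal) < T := by
      rcases le_total a 0 with hc | hc
      · rw [max_eq_right hc]; exact_mod_cast hT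
      · rwa [max_eq_left hc]
    obtain ⟨t₀, ht₀1, ht₀2⟩ := exists_real_btwn hmaxT
    have ht₀1' : max a 0 < t₀ := by exact_mod_cast ht₀1
    have ht₀U : t₀ ∈ U := ⟨lt_of_le_of_lt (le_max_right a 0) ht₀1', ht₀2⟩
    have hat₀ : a < t₀ := lt_of_le_of_lt (le_max_left a 0) ht₀1'
    set K2 : ℝ := F t₀ ^ 2 with hK2def
    set I0 : ℝ := fisherInfo b σ α t₀ with hI0def
    have hI0nn : 0 ≤ I0 := hInonneg t₀ (hUD ht₀U)
    set c2 : ℝ := 2 / (C^2 + δ) * I0 with hc2def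
    have hc2nn : 0 ≤ c2 := mul_nonneg (by positivity) hI0nn
    have hev1 := eventually_upFilter hbotT ht₀2
    have hevK : ∀ᶠ t in upFilter T, K2 / fisherInfo b σ α t < ε/2 := by
      filter_upwards [Metric.tendsto_nhds.1 (tendsto_const_nhds.div_atTop hI) (ε/2) (by linarith)]
        with t ht
      rw [Real.dist_eq, sub_zero] at ht
      exact lt_of_le_of_lt (le_abs_self _) ht
    have hevc : ∀ᶠ t in upFilter T, c2 / fisherInfo b σ α t < ε/2 := by
      filter_upwards [Metric.tendsto_nhds.1 (tendsto_const_nhds.div_atTop hI) (ε/2) (by linarith)]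
        with t ht
      rw [Real.dist_eq, sub_zero] at ht
      exact lt_of_le_of_lt (le_abs_self _) ht
    have hevI : ∀ᶠ t in upFilter T, 0 < fisherInfo b σ α t := hI.eventually_gt_atTop 0
    filter_upwards [hev1, hevK, hevc, hevI] with t ht1 htK htc htI
    have htU : t ∈ U := ⟨ht₀U.1.trans ht1.1, ht1.2⟩
    have hle : t₀ ≤ t := ht1.1.le
    -- integral inequalities
    have hsub0 : Icc t₀ t ⊆ Icc 0 t := Icc_subset_Icc ht₀U.1.le le_rfl
    have hsubU : Icc t₀ t ⊆ U := hIccU t₀ ht₀U t (hUD htU)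
    have hFfInt : IntervalIntegrable (fun s => F s * f s) volume t₀ t := by
      apply ContinuousOn.intervalIntegrable
      rw [uIcc_of_le hle]
      exact ((hFcontD t (hUD htU)).mono hsub0).mul ((hfcontD t (hUD htU)).mono hsub0)
    have hhInt' : IntervalIntegrable h volume t₀ t := by
      apply ContinuousOn.intervalIntegrable
      rw [uIcc_of_le hle]
      exact (hhcontD t (hUD htU)).mono hsub0
    have hFfnn : ∀ s ∈ Icc t₀ t, 0 ≤ F s * f s := fun s hs =>
      mul_nonneg (hFnonneg s (hsub0 hs).1) (hf_nonneg s)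
    have hbandlo : ∀ s ∈ Icc t₀ t, (C^2 - δ) * (F s * f s) ≤ h s := by
      intro s hs
      have hsU : s ∈ U := hsubU hs
      have hb2 := ha s (hat₀.trans_le hs.1) hsU.2
      have := abs_le.1 hb2
      rw [hkey s (hUD hsU)]
      exact mul_le_mul_of_nonneg_right (by linarith [this.1]) (hFfnn s hs)
    have hbandhi : ∀ s ∈ Icc t₀ t, h s ≤ (C^2 + δ) * (F s * f s) := by
      intro s hs
      have hsU : s ∈ U := hsubU hs
      have hb2 := ha s (hat₀.trans_le hs.1) hsU.2
      have := abs_le.1 hb2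
      rw [hkey s (hUD hsU)]
      exact mul_le_mul_of_nonneg_right (by linarith [this.2]) (hFfnn s hs)
    set J : ℝ := ∫ s in t₀..t, F s * f s with hJdef
    have hJnn : 0 ≤ J :=
      intervalIntegral.integral_nonneg hle hFfnn
    have hlow : (C^2 - δ) * J ≤ fisherInfo b σ α t - I0 := by
      rw [hFTC_I t₀ ht₀U t htU hle, hJdef, ← intervalIntegral.integral_const_mul]
      exact intervalIntegral.integral_mono_on hle (hFfInt.const_mul _) hhInt' hbandlo
    have hhigh : fisherInfo b σ α t - I0 ≤ (C^2 + δ) * J := by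
      rw [hFTC_I t₀ ht₀U t htU hle, hJdef, ← intervalIntegral.integral_const_mul]
      exact intervalIntegral.integral_mono_on hle hhInt' (hFfInt.const_mul _) hbandhi
    have hGid : F t ^ 2 = K2 + 2 * J := by
      have := hFTC_G t₀ ht₀U t htU hle
      rw [hJdef]; linarith
    set It : ℝ := fisherInfo b σ α t with hItdef
    -- upper bound
    have h2J_up : 2 * J ≤ 2 / (C^2 - δ) * It := by
      have hm := mul_le_mul_of_nonneg_left hlow (le_of_lt (by positivity : (0:ℝ) < 2/(C^2-δ)))
      have he : 2 / (C^2 - δ) * ((C^2 - δ) * J) = 2 * J := by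
        field_simp
      have hm2 : 2 / (C^2 - δ) * (It - I0) ≤ 2 / (C^2 - δ) * It := by
        have : It - I0 ≤ It := by linarith
        exact mul_le_mul_of_nonneg_left this (by positivity)
      calc 2 * J = 2 / (C^2 - δ) * ((C^2 - δ) * J) := he.symm
        _ ≤ 2 / (C^2 - δ) * (It - I0) := hm
        _ ≤ 2 / (C^2 - δ) * It := hm2
    have hup : F t ^ 2 / It ≤ K2 / It + 2 / (C^2 - δ) := by
      have h1 : F t ^ 2 ≤ K2 + 2 / (C^2 - δ) * It := by linarith
      have h2 : F t ^ 2 / It ≤ (K2 + 2 / (C^2 - δ) * It) / It :=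
        (div_le_div_iff_of_pos_right htI).2 h1
      rwa [add_div, mul_div_assoc, div_self htI.ne', mul_one] at h2
    -- lower bound
    have h2J_lo : 2 / (C^2 + δ) * It - c2 ≤ 2 * J := by
      have hm := mul_le_mul_of_nonneg_left hhigh (le_of_lt (by positivity : (0:ℝ) < 2/(C^2+δ)))
      have he : 2 / (C^2 + δ) * ((C^2 + δ) * J) = 2 * J := by
        field_simp
      rw [he] at hm
      rw [hc2def]
      nlinarith [hm]
    have hlo : 2 / (C^2 + δ) - c2 / It ≤ F t ^ 2 / It := by
      have h1 : 2 / (C^2 + δ) * It - c2 ≤ F t ^ 2 := by nlinarith [hGid, h2J_lo, sq_nonneg (F t₀)]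
      have h2 : (2 / (C^2 + δ) * It - c2) / It ≤ F t ^ 2 / It :=
        (div_le_div_iff_of_pos_right htI).2 h1
      rwa [sub_div, mul_div_assoc, div_self htI.ne', mul_one] at h2
    rw [Real.dist_eq, abs_lt]
    constructor
    · have : (0:ℝ) ≤ c2 / It := div_nonneg hc2nn htI.le
      nlinarith [hq1, htc, hlo]
    · have : (0:ℝ) ≤ K2 / It := div_nonneg (sq_nonneg _) htI.le
      nlinarith [hq2, htK, hup]
  -- second conclusion
  have hsecond : Tendsto (fun t => F t / Real.sqrt (fisherInfo b σ α t)) (upFilter T)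
      (𝓝 (Real.sqrt 2 / |C|)) := by
    have h1 := main.sqrt
    rw [Real.sqrt_div (by norm_num : (0:ℝ) ≤ 2), Real.sqrt_sq_eq_abs] at h1
    apply h1.congr'
    have h0T : ((0:ℝ) : EReal) < T := by exact_mod_cast hT
    filter_upwards [eventually_upFilter hbotT h0T, hI.eventually_gt_atTop 0] with t ht htI
    rw [Real.sqrt_div (sq_nonneg (F t)), Real.sqrt_sq_eq_abs,
      abs_of_nonneg (hFnonneg t ht.1.le)]
  refine ⟨?_, ?_⟩
  · exact main
  · exact hsecond
end

section
/- Let T ∈ (0,∞], let b : [0,T) → ℝ and σ : [0,T) → (0,∞) be continuous, and let α ∈ ℝ. If lim_{t↑T} ∫₀ᵗ σ(s)²·exp{−2α∫₀ˢ b(v) dv} ds < ∞ (i.e., the increasing limit is finite) and lim_{t↑T} ∫₀ᵗ |b(s)| ds = ∞, then lim_{t↑T} I_α(t) = ∞. -/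
open MeasureTheory Filter Set Topology intervalIntegral

/-- If `∫₀ᵗ σ(s)² exp{−2α∫₀ˢ b} ds` has a finite limit as `t ↑ T` while
`∫₀ᵗ |b(s)| ds → ∞`, then `I_α(t) → ∞` as `t ↑ T`. -/
theorem fisher_atTop_of_finite_variance_and_intAbs_atTop (T : EReal) (hT : 0 < T)
    (b σ : ℝ → ℝ) (α : ℝ)
    (hb : ContinuousOn b {t : ℝ | 0 ≤ t ∧ (t : EReal) < T})
    (hσ : ContinuousOn σ {t : ℝ | 0 ≤ t ∧ (t : EReal) < T})
    (hσpos : ∀ t : ℝ, 0 ≤ t → (t : EReal) < T → 0 < σ t)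
    (hfin : ∃ S : ℝ, Tendsto
      (fun t : ℝ =>
        ∫ s in (0:ℝ)..t, (σ s) ^ 2 * Real.exp (-(2 * α) * ∫ v in (0:ℝ)..s, b v))
      (upFilter T) (𝓝 S))
    (hB : Tendsto (fun t : ℝ => ∫ s in (0:ℝ)..t, |b s|) (upFilter T) atTop) :
    Tendsto (fisherInfo b σ α) (upFilter T) atTop := by
  obtain ⟨S, hS⟩ := hfin
  obtain ⟨ε, hε0', hεT⟩ := EReal.lt_iff_exists_real_btwn.mp hT
  have hεpos : (0:ℝ) < ε := by exact_mod_cast hε0'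
  set A : ℝ → ℝ := fun x => ∫ v in (0:ℝ)..x, b v with hA_def
  set F : ℝ → ℝ := fun x => ∫ s in (0:ℝ)..x, σ s ^ 2 * Real.exp (-(2 * α) * A s)
    with hF_def
  set Bf : ℝ → ℝ := fun x => ∫ s in (0:ℝ)..x, |b s| with hBf_def
  set w : ℝ → ℝ := fun s => σ s ^ 2 * Real.exp (-(2 * α) * A s) with hw_def
  set core : ℝ → ℝ := fun s => b s ^ 2 / σ s ^ 2 * Real.exp (2 * α * A s)
    with hcore_def
  have hsub : ∀ x : ℝ, (x : EReal) < T →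
      Icc (0:ℝ) x ⊆ {t : ℝ | 0 ≤ t ∧ (t : EReal) < T} := by
    intro x hx s hs
    exact ⟨hs.1, lt_of_le_of_lt (EReal.coe_le_coe_iff.mpr hs.2) hx⟩
  -- basic continuity facts on `Icc 0 x` for `x < T`
  have hbC : ∀ x : ℝ, (x : EReal) < T → ContinuousOn b (Icc 0 x) :=
    fun x hx => hb.mono (hsub x hx)
  have hσC : ∀ x : ℝ, (x : EReal) < T → ContinuousOn σ (Icc 0 x) :=
    fun x hx => hσ.mono (hsub x hx)
  have hbI : ∀ x : ℝ, 0 ≤ x → (x : EReal) < T → IntervalIntegrable b volume 0 x :=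
    fun x h0 hx => (hbC x hx).intervalIntegrable_of_Icc h0
  have hAC : ∀ x : ℝ, 0 ≤ x → (x : EReal) < T → ContinuousOn A (Icc 0 x) := by
    intro x h0 hx
    have := continuousOn_primitive_interval (μ := volume) (f := b) (a := (0:ℝ)) (b := x)
      (by rw [uIcc_of_le h0]; exact (hbC x hx).integrableOn_Icc)
    rwa [uIcc_of_le h0] at this
  have hwC : ∀ x : ℝ, 0 ≤ x → (x : EReal) < T → ContinuousOn w (Icc 0 x) := by
    intro x h0 hx
    exact ((hσC x hx).pow 2).mul
      (Real.continuous_exp.comp_continuousOn (continuousOn_const.mul (hAC x h0 hx)))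
  have hwnn : ∀ s, 0 ≤ w s := fun s =>
    mul_nonneg (sq_nonneg _) (Real.exp_pos _).le
  have hwI : ∀ x : ℝ, 0 ≤ x → (x : EReal) < T → IntervalIntegrable w volume 0 x :=
    fun x h0 hx => (hwC x h0 hx).intervalIntegrable_of_Icc h0
  have hFnn : ∀ x : ℝ, 0 ≤ x → 0 ≤ F x := by
    intro x h0
    exact intervalIntegral.integral_nonneg h0 (fun s _ => hwnn s)
  -- monotonicity-type fact : F x - F y = ∫ y..x w
  have hFsub : ∀ y x : ℝ, 0 ≤ y → y ≤ x → (x : EReal) < T →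
      F x - F y = ∫ s in y..x, w s := by
    intro y x h0y hyx hx
    exact integral_interval_sub_left (hwI x (h0y.trans hyx) hx)
      (hwI y h0y (lt_of_le_of_lt (EReal.coe_le_coe_iff.mpr hyx) hx))
  have hFmono : ∀ y x : ℝ, 0 ≤ y → y ≤ x → (x : EReal) < T → F y ≤ F x := by
    intro y x h0y hyx hx
    have h := hFsub y x h0y hyx hx
    have : 0 ≤ ∫ s in y..x, w s :=
      intervalIntegral.integral_nonneg hyx (fun s _ => hwnn s)
    linarith
  -- inner integral identity
  have hinner : ∀ x : ℝ, 0 ≤ x → (x : EReal) < T →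
      (∫ u in (0:ℝ)..x, σ u ^ 2 * Real.exp (2 * α * ∫ v in u..x, b v))
        = Real.exp (2 * α * A x) * F x := by
    intro x h0 hx
    have h1 : EqOn (fun u => σ u ^ 2 * Real.exp (2 * α * ∫ v in u..x, b v))
        (fun u => Real.exp (2 * α * A x) * (σ u ^ 2 * Real.exp (-(2 * α) * A u)))
        (uIcc 0 x) := by
      intro u hu
      rw [uIcc_of_le h0] at hu
      have huT : (u : EReal) < T := lt_of_le_of_lt (EReal.coe_le_coe_iff.mpr hu.2) hx
      have h2 : (∫ v in u..x, b v) = A x - A u :=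
        (integral_interval_sub_left (hbI x h0 hx) (hbI u hu.1 huT)).symm
      dsimp only
      rw [h2, show 2 * α * (A x - A u) = 2 * α * A x + -(2 * α) * A u by ring,
        Real.exp_add]
      ring
    rw [intervalIntegral.integral_congr h1, intervalIntegral.integral_const_mul]
  -- F ε > 0
  have hεE : (ε : EReal) < T := hεT
  have hFε : 0 < F ε := by
    refine intervalIntegral_pos_of_pos_on (hwI ε hεpos.le hεE) ?_ hεpos
    intro s hs
    have hsD : s ∈ Icc (0:ℝ) ε := ⟨hs.1.le, hs.2.le⟩
    have hsT : (s : EReal) < T := (hsub ε hεE hsD).2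
    exact mul_pos (pow_pos (hσpos s hs.1.le hsT) 2) (Real.exp_pos _)
  -- eventual facts
  have hev1 : ∀ᶠ t in upFilter T, ε < t := by
    have hmem : Ioi (ε : EReal) ∈ 𝓝[<] T :=
      mem_nhdsWithin_of_mem_nhds (isOpen_Ioi.mem_nhds hεT)
    have h2 : (fun x : ℝ => (x : EReal)) ⁻¹' (Ioi (ε : EReal)) ∈ upFilter T :=
      Filter.preimage_mem_comap hmem
    filter_upwards [h2] with t ht
    simp only [mem_preimage, mem_Ioi] at ht
    exact_mod_cast ht
  have hev2 : ∀ᶠ t : ℝ in upFilter T, (t : EReal) < T := by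
    have h2 : (fun x : ℝ => (x : EReal)) ⁻¹' (Iio T) ∈ upFilter T :=
      Filter.preimage_mem_comap self_mem_nhdsWithin
    filter_upwards [h2] with t ht
    simpa using ht
  have hev3 : ∀ᶠ t in upFilter T, F t ≤ S + 1 :=
    (hS.eventually_lt_const (lt_add_one S)).mono fun t ht => ht.le
  -- the lower bound function tends to atTop
  have hlow : Tendsto (fun t => F ε * (2 * (Bf t - Bf ε) - (S + 1)))
      (upFilter T) atTop := by
    have h1 : Tendsto (fun t => 2 * Bf t) (upFilter T) atTop :=
      hB.const_mul_atTop two_pos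
    have h2 : Tendsto (fun t => 2 * Bf t + (-(2 * Bf ε) - (S + 1)))
        (upFilter T) atTop := tendsto_atTop_add_const_right _ _ h1
    have h3 : Tendsto (fun t => 2 * (Bf t - Bf ε) - (S + 1)) (upFilter T) atTop :=
      h2.congr fun t => by ring
    exact h3.const_mul_atTop hFε
  refine tendsto_atTop_mono' (upFilter T) ?_ hlow
  filter_upwards [hev1, hev2, hev3] with t hεt htT hFt
  have h0t : (0:ℝ) ≤ t := hεpos.le.trans hεt.le
  have hεle : ε ≤ t := hεt.le
  -- continuity / integrability on the needed intervals
  have hIccsub : Icc ε t ⊆ Icc 0 t := Icc_subset_Icc hεpos.le le_rfl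
  have hcoreC : ContinuousOn core (Icc 0 t) := by
    refine ContinuousOn.mul ?_
      (Real.continuous_exp.comp_continuousOn (continuousOn_const.mul (hAC t h0t htT)))
    refine ((hbC t htT).pow 2).div ((hσC t htT).pow 2) ?_
    intro s hs
    exact pow_ne_zero 2 (ne_of_gt (hσpos s hs.1 ((hsub t htT hs).2)))
  have hcorenn : ∀ s, 0 ≤ core s := fun s =>
    mul_nonneg (div_nonneg (sq_nonneg _) (sq_nonneg _)) (Real.exp_pos _).le
  have hFC : ContinuousOn F (Icc 0 t) := by
    have := continuousOn_primitive_interval (μ := volume) (f := w) (a := (0:ℝ)) (b := t)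
      (by rw [uIcc_of_le h0t]; exact (hwC t h0t htT).integrableOn_Icc)
    rwa [uIcc_of_le h0t] at this
  have hcoreFI : IntervalIntegrable (fun s => core s * F s) volume 0 t :=
    (hcoreC.mul hFC).intervalIntegrable_of_Icc h0t
  have hcoreI_εt : IntervalIntegrable core volume ε t :=
    (hcoreC.mono (Icc_subset_Icc hεpos.le le_rfl)).intervalIntegrable_of_Icc hεle
  have hwI_εt : IntervalIntegrable w volume ε t :=
    ((hwC t h0t htT).mono hIccsub).intervalIntegrable_of_Icc hεle
  have habsI : ∀ x : ℝ, 0 ≤ x → (x : EReal) < T →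
      IntervalIntegrable (fun s => |b s|) volume 0 x :=
    fun x h0 hx => ((hbC x hx).abs).intervalIntegrable_of_Icc h0
  -- rewrite fisherInfo
  have hfish : fisherInfo b σ α t = ∫ s in (0:ℝ)..t, core s * F s := by
    refine intervalIntegral.integral_congr ?_
    intro s hs
    rw [uIcc_of_le h0t] at hs
    have hsT : (s : EReal) < T := (hsub t htT hs).2
    dsimp only
    rw [hinner s hs.1 hsT]
    ring
  rw [hfish]
  -- split the integral at ε
  have hc1 : IntervalIntegrable (fun s => core s * F s) volume 0 ε := by
    apply hcoreFI.mono_set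
    rw [uIcc_of_le h0t, uIcc_of_le hεpos.le]
    exact Icc_subset_Icc le_rfl hεle
  have hc2 : IntervalIntegrable (fun s => core s * F s) volume ε t := by
    apply hcoreFI.mono_set
    rw [uIcc_of_le h0t, uIcc_of_le hεle]
    exact Icc_subset_Icc hεpos.le le_rfl
  have hsplit : (∫ s in (0:ℝ)..t, core s * F s)
      = (∫ s in (0:ℝ)..ε, core s * F s) + ∫ s in ε..t, core s * F s :=
    (intervalIntegral.integral_add_adjacent_intervals hc1 hc2).symm
  have habsI_εt : IntervalIntegrable (fun s => |b s|) volume ε t :=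
    (((hbC t htT).abs).mono hIccsub).intervalIntegrable_of_Icc hεle
  -- nonnegativity of the [0, ε] part
  have h0εpart : 0 ≤ ∫ s in (0:ℝ)..ε, core s * F s :=
    intervalIntegral.integral_nonneg hεpos.le
      (fun s hs => mul_nonneg (hcorenn s) (hFnn s hs.1))
  -- step 2 : F ε * ∫ core ≤ ∫ core * F on [ε, t]
  have hstep2 : F ε * (∫ s in ε..t, core s) ≤ ∫ s in ε..t, core s * F s := by
    rw [← intervalIntegral.integral_const_mul]
    refine intervalIntegral.integral_mono_on hεle (hcoreI_εt.const_mul _) hc2 ?_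
    intro s hs
    have hsT : (s : EReal) < T := lt_of_le_of_lt (EReal.coe_le_coe_iff.mpr hs.2) htT
    have hFεs : F ε ≤ F s := hFmono ε s hεpos.le hs.1 hsT
    calc F ε * core s = core s * F ε := mul_comm _ _
      _ ≤ core s * F s := mul_le_mul_of_nonneg_left hFεs (hcorenn s)
  -- pointwise AM-GM inequality
  have hpt : ∀ s ∈ Icc ε t, 2 * |b s| ≤ core s + w s := by
    intro s hs
    have hs0 : (0:ℝ) ≤ s := hεpos.le.trans hs.1
    have hsT : (s : EReal) < T := lt_of_le_of_lt (EReal.coe_le_coe_iff.mpr hs.2) htT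
    have hσs : 0 < σ s := hσpos s hs0 hsT
    set e := Real.exp (α * A s) with he_def
    have he : 0 < e := Real.exp_pos _
    have key := two_mul_le_add_sq (|b s| / σ s * e) (σ s * e⁻¹)
    have h1 : (|b s| / σ s * e) * (σ s * e⁻¹) = |b s| := by
      field_simp
    have h2 : (|b s| / σ s * e) ^ 2 = b s ^ 2 / σ s ^ 2 * Real.exp (2 * α * A s) := by
      have he2 : Real.exp (2 * α * A s) = e ^ 2 := by
        rw [sq, ← Real.exp_add]; congr 1; ring
      rw [he2, mul_pow, div_pow, sq_abs]
    have h3 : (σ s * e⁻¹) ^ 2 = σ s ^ 2 * Real.exp (-(2 * α) * A s) := by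
      have he3 : Real.exp (-(2 * α) * A s) = (e⁻¹) ^ 2 := by
        rw [← Real.exp_neg, sq, ← Real.exp_add]; congr 1; ring
      rw [he3, mul_pow]
    rw [mul_assoc, h1, h2, h3] at key
    simp only [hcore_def, hw_def]
    exact key
  -- step 1 : 2 (Bf t - Bf ε) ≤ ∫ core + (F t - F ε)
  have habs_eq : Bf t - Bf ε = ∫ s in ε..t, |b s| :=
    integral_interval_sub_left (habsI t h0t htT) (habsI ε hεpos.le hεE)
  have hstep1 : 2 * (Bf t - Bf ε) ≤ (∫ s in ε..t, core s) + (F t - F ε) := by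
    rw [habs_eq, hFsub ε t hεpos.le hεle htT,
      ← intervalIntegral.integral_add hcoreI_εt hwI_εt,
      ← intervalIntegral.integral_const_mul]
    exact intervalIntegral.integral_mono_on hεle (habsI_εt.const_mul 2)
      (hcoreI_εt.add hwI_εt) hpt
  -- combine
  have hA1 : 2 * (Bf t - Bf ε) - (S + 1) ≤ ∫ s in ε..t, core s := by
    have : F t - F ε ≤ S + 1 := by linarith
    linarith
  have hA2 : F ε * (2 * (Bf t - Bf ε) - (S + 1)) ≤ F ε * ∫ s in ε..t, core s :=
    mul_le_mul_of_nonneg_left hA1 hFε.le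
  rw [hsplit]
  linarith
end
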